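/- arXiv:2604.09340 — 3 statements merged into one kernel-verified Lean document; each statement's English description precedes it below -/
import Mathlib

section
/- In the constant-marginal-cost posted-price model: (i) for every Borel probability measure G on [0,1], the set R*(G) is nonempty and compact; (ii) if k ∈ [0,1/2], then V_k^{pp} = Q̄·(1−k)·(1−M), and the unique maximizing pair is (G,r) = (δ₁, 1), where δ₁ is the point mass at 1; (iii) if k ∈ (1/2,1], set r_k := M + (1−M)·e^{−(2k−1)/k} ∈ (M,1) and let G_k be the probability measure on [0,1] with CDF G_k(v) = 0 for v < r_k, G_k(v) = 1 − (r_k−M)/(v−M) for r_k ≤ v < 1, and G_k(1) = 1. Then (G_k, r_k) is the unique maximizing pair, V_k^{pp} = Q̄·k·(1−M)·e^{−(2k−1)/k}, Π_{G_k}(r_k) = Q̄·(1−M)·e^{−(2k−1)/k}, and CS_{G_k}(r_k) = Q̄·(1−M)·e^{−(2k−1)/k}·(2k−1)/k. -/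
open MeasureTheory Set Filter Topology

namespace PostedPrice

/-- `G` is a Borel probability measure on `[0,1]`. -/
def ProbOn01 (G : Measure ℝ) : Prop :=
  IsProbabilityMeasure G ∧ G (Set.Icc 0 1) = 1

/-- Survival function `S_G(v) = G([v,1])`. -/
noncomputable def SG (G : Measure ℝ) (v : ℝ) : ℝ := (G (Set.Icc v 1)).toReal

/-- Seller profit from posting cutoff price `r`: `Π_G(r) = Q̄·(r−M)·S_G(r)`. -/
noncomputable def PiG (Qbar M : ℝ) (G : Measure ℝ) (r : ℝ) : ℝ :=
  Qbar * (r - M) * SG G r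

/-- Consumer surplus from cutoff price `r`: `CS_G(r) = Q̄·∫_r^1 S_G(v) dv`. -/
noncomputable def CSG (Qbar : ℝ) (G : Measure ℝ) (r : ℝ) : ℝ :=
  Qbar * ∫ v in r..1, SG G v

/-- The seller-optimal posted-price cutoffs `R*(G)`. -/
def Rstar (M : ℝ) (G : Measure ℝ) : Set ℝ :=
  {r ∈ Set.Icc M 1 | ∀ r' ∈ Set.Icc M 1, (r' - M) * SG G r' ≤ (r - M) * SG G r}

/-- Weighted objective `J_k(G,r)`. -/
noncomputable def Jpp (Qbar M k : ℝ) (G : Measure ℝ) (r : ℝ) : ℝ :=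
  k * CSG Qbar G r + (1 - k) * PiG Qbar M G r

/-- Optimal value of the upstream problem, `V_k^{pp}`. -/
noncomputable def Vpp (Qbar M k : ℝ) : ℝ :=
  sSup {x | ∃ G : Measure ℝ, ProbOn01 G ∧ ∃ r ∈ Rstar M G, x = Jpp Qbar M k G r}

/-- `r_k = M + (1−M)·e^{−(2k−1)/k}`. -/
noncomputable def rkFun (M k : ℝ) : ℝ := M + (1 - M) * Real.exp (-(2*k - 1)/k)

/-- CDF of the optimal market composition `G_k` for `k ∈ (1/2,1]`. -/
noncomputable def GkCDF (M k v : ℝ) : ℝ :=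
  if v < rkFun M k then 0
  else if v < 1 then 1 - (rkFun M k - M) / (v - M)
  else 1


section Helpers

variable {G : Measure ℝ} {M k : ℝ}

lemma probMeas (hG : ProbOn01 G) : IsProbabilityMeasure G := hG.1

lemma SG_nonneg (G : Measure ℝ) (v : ℝ) : 0 ≤ SG G v := ENNReal.toReal_nonneg

lemma SG_le_one (hG : ProbOn01 G) (v : ℝ) : SG G v ≤ 1 := by
  haveI := hG.1
  simpa [SG] using ENNReal.toReal_mono (by simp) (prob_le_one (μ := G) (s := Set.Icc v 1))

lemma SG_anti (hG : ProbOn01 G) : Antitone (SG G) := by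
  haveI := hG.1
  intro u v huv
  exact ENNReal.toReal_mono (measure_ne_top G _) (measure_mono (Icc_subset_Icc huv le_rfl))

lemma SG_of_one_lt (G : Measure ℝ) {v : ℝ} (hv : 1 < v) : SG G v = 0 := by
  unfold SG
  rw [Set.Icc_eq_empty (by linarith)]
  simp

lemma SG_intervalIntegrable (hG : ProbOn01 G) (a b : ℝ) :
    IntervalIntegrable (SG G) volume a b :=
  ((SG_anti hG).antitoneOn _).intervalIntegrable

lemma SG_measurable (hG : ProbOn01 G) : Measurable (SG G) :=
  (SG_anti hG).measurable

/-- Left continuity of the survival function along monotone sequences. -/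
lemma SG_tendsto_left (hG : ProbOn01 G) {v : ℝ} {u : ℕ → ℝ} (hmono : Monotone u)
    (hle : ∀ n, u n ≤ v) (hlim : Tendsto u atTop (𝓝 v)) :
    Tendsto (fun n => SG G (u n)) atTop (𝓝 (SG G v)) := by
  haveI := hG.1
  have hset : ⋂ n, Set.Icc (u n) 1 = Set.Icc v 1 := by
    ext x
    simp only [Set.mem_iInter, Set.mem_Icc]
    constructor
    · intro h
      exact ⟨le_of_tendsto hlim (Eventually.of_forall fun n => (h n).1), (h 0).2⟩
    · rintro ⟨h1, h2⟩ n
      exact ⟨(hle n).trans h1, h2⟩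
  have h2 := tendsto_measure_iInter_atTop (μ := G) (s := fun n => Set.Icc (u n) 1)
    (fun n => measurableSet_Icc.nullMeasurableSet)
    (fun m n hmn => Set.Icc_subset_Icc (hmono hmn) le_rfl) ⟨0, measure_ne_top G _⟩
  rw [hset] at h2
  exact (ENNReal.tendsto_toReal (measure_ne_top G _)).comp h2

/-- Right limits give the measure of `Ioc v 1`. -/
lemma SG_tendsto_right (hG : ProbOn01 G) {v : ℝ} {u : ℕ → ℝ} (hanti : Antitone u)
    (hgt : ∀ n, v < u n) (hlim : Tendsto u atTop (𝓝 v)) :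
    Tendsto (fun n => SG G (u n)) atTop (𝓝 ((G (Set.Ioc v 1)).toReal)) := by
  haveI := hG.1
  have hset : ⋃ n, Set.Icc (u n) 1 = Set.Ioc v 1 := by
    ext x
    simp only [Set.mem_iUnion, Set.mem_Icc, Set.mem_Ioc]
    constructor
    · rintro ⟨n, h1, h2⟩
      exact ⟨lt_of_lt_of_le (hgt n) h1, h2⟩
    · rintro ⟨h1, h2⟩
      obtain ⟨n, hn⟩ := (hlim.eventually (eventually_lt_nhds h1)).exists
      exact ⟨n, hn.le, h2⟩
  have h2 := tendsto_measure_iUnion_atTop (μ := G) (s := fun n => Set.Icc (u n) 1)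
    (fun m n hmn => Set.Icc_subset_Icc (hanti hmn) le_rfl)
  rw [hset] at h2
  exact (ENNReal.tendsto_toReal (measure_ne_top G _)).comp h2

lemma compl_null (hG : ProbOn01 G) : G (Set.Icc 0 1)ᶜ = 0 := by
  haveI := hG.1
  rw [measure_compl measurableSet_Icc (measure_ne_top G _), hG.2, measure_univ]
  simp

lemma Ioi_one_null (hG : ProbOn01 G) : G (Set.Ioi 1) = 0 := by
  refine measure_mono_null ?_ (compl_null hG)
  intro x hx
  simp only [Set.mem_Ioi] at hx
  simp only [Set.mem_compl_iff, Set.mem_Icc, not_and_or, not_le]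
  right; exact hx

lemma meas_Ioi_eq_Ioc (hG : ProbOn01 G) (v : ℝ) : G (Set.Ioi v) = G (Set.Ioc v 1) := by
  refine le_antisymm ?_ (measure_mono Set.Ioc_subset_Ioi_self)
  calc G (Set.Ioi v) ≤ G (Set.Ioc v 1 ∪ Set.Ioi 1) := by
        refine measure_mono fun x hx => ?_
        simp only [Set.mem_Ioi] at hx
        by_cases h : x ≤ 1
        · exact Or.inl ⟨hx, h⟩
        · exact Or.inr (by simpa using not_le.mp h)
    _ ≤ G (Set.Ioc v 1) + G (Set.Ioi 1) := measure_union_le _ _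
    _ = G (Set.Ioc v 1) := by rw [Ioi_one_null hG, add_zero]

lemma cdf_eq_one_sub (hG : ProbOn01 G) (v : ℝ) :
    (G (Set.Iic v)).toReal = 1 - (G (Set.Ioi v)).toReal := by
  haveI := hG.1
  have h1 : G (Set.Iic v) = 1 - G (Set.Ioi v) := by
    rw [← Set.compl_Ioi, measure_compl measurableSet_Ioi (measure_ne_top G _), measure_univ]
  rw [h1, ENNReal.toReal_sub_of_le (prob_le_one) (by simp)]
  simp

end Helpers
section Rstar

variable {G : Measure ℝ} {M : ℝ}

lemma tendsto_sub_div (c d : ℝ) :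
    Tendsto (fun n : ℕ => c - d/(n+1)) atTop (𝓝 c) := by
  have h0 : Tendsto (fun n : ℕ => d * (1/(n+1))) atTop (𝓝 (d * 0)) :=
    tendsto_const_nhds.mul tendsto_one_div_add_atTop_nhds_zero_nat
  have : Tendsto (fun n : ℕ => c - d * (1/(n+1))) atTop (𝓝 (c - d * 0)) :=
    tendsto_const_nhds.sub h0
  simpa [mul_one_div, div_eq_mul_inv] using this

lemma tendsto_add_div (c d : ℝ) :
    Tendsto (fun n : ℕ => c + d/(n+1)) atTop (𝓝 c) := by
  have := tendsto_sub_div c (-d)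
  simpa [sub_neg_eq_add, neg_div] using this

/-- Upper semicontinuity of the profit function on `[M,1]`. -/
lemma profit_usc (hG : ProbOn01 G) (hM0 : 0 ≤ M) {r0 y : ℝ} (hr0 : r0 ∈ Set.Icc M 1)
    (hy : (r0 - M) * SG G r0 < y) :
    ∀ᶠ x in 𝓝[Set.Icc M 1] r0, (x - M) * SG G x < y := by
  rcases eq_or_lt_of_le hr0.1 with hMr | hMr
  · -- r0 = M
    have hy0 : 0 < y := by
      have := SG_nonneg G r0
      nlinarith [hr0.1, sub_nonneg.mpr hr0.1]
    have h1 : ∀ᶠ x in 𝓝 r0, |x - r0| < y := by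
      have : Metric.ball r0 y ∈ 𝓝 r0 := Metric.ball_mem_nhds _ hy0
      filter_upwards [this] with x hx
      simpa [Real.dist_eq] using hx
    filter_upwards [h1.filter_mono nhdsWithin_le_nhds, self_mem_nhdsWithin] with x hx hxI
    have h2 : x - M < y := by
      rw [abs_lt] at hx
      have := hx.2
      linarith [hMr]
    nlinarith [SG_nonneg G x, SG_le_one hG x, sub_nonneg.mpr hxI.1]
  · -- M < r0
    set S0 := SG G r0 with hS0
    have hseq : Tendsto (fun n : ℕ => r0 - (r0 - M)/(n+1)) atTop (𝓝 r0) :=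
      tendsto_sub_div r0 (r0 - M)
    have hmono : Monotone (fun n : ℕ => r0 - (r0 - M)/(n+1)) := by
      intro m n hmn
      have h1 : (0:ℝ) < m + 1 := by positivity
      have h2 : (m:ℝ) + 1 ≤ n + 1 := by exact_mod_cast by omega
      have := div_le_div_of_nonneg_left (by linarith [hMr] : (0:ℝ) ≤ r0 - M) h1 h2
      simp only
      linarith
    have hle : ∀ n : ℕ, r0 - (r0 - M)/(n+1) ≤ r0 := by
      intro n
      have : (0:ℝ) ≤ (r0 - M)/(n+1) := div_nonneg (by linarith) (by positivity)
      linarith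
    have hSlim := SG_tendsto_left hG hmono hle hseq
    have hlim2 : Tendsto (fun n : ℕ => (r0 - M) * SG G (r0 - (r0 - M)/(n+1))) atTop
        (𝓝 ((r0 - M) * S0)) := tendsto_const_nhds.mul hSlim
    obtain ⟨N, hN⟩ := (hlim2.eventually (eventually_lt_nhds hy)).exists
    set u := r0 - (r0 - M)/(N+1) with hu
    have huM : u < r0 := by
      have : (0:ℝ) < (r0 - M)/(N+1) := div_pos (by linarith) (by positivity)
      simp only [hu]; linarith
    set s := SG G u with hs
    have hs0 : 0 ≤ s := SG_nonneg G u
    have hNy : (r0 - M) * s < y := hN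
    set δ := min (r0 - u) ((y - (r0 - M)*s)/(s+1)) with hδ
    have hδ0 : 0 < δ := by
      apply lt_min (by linarith)
      apply div_pos (by linarith) (by linarith)
    have h1 : ∀ᶠ x in 𝓝 r0, |x - r0| < δ := by
      have : Metric.ball r0 δ ∈ 𝓝 r0 := Metric.ball_mem_nhds _ hδ0
      filter_upwards [this] with x hx
      simpa [Real.dist_eq] using hx
    filter_upwards [h1.filter_mono nhdsWithin_le_nhds, self_mem_nhdsWithin] with x hx hxI
    rw [abs_lt] at hx
    have hux : u ≤ x := by
      have : δ ≤ r0 - u := min_le_left _ _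
      linarith [hx.1]
    have hSx : SG G x ≤ s := SG_anti hG hux
    have hδ2 : δ ≤ (y - (r0 - M)*s)/(s+1) := min_le_right _ _
    have hδ3 : δ * (s+1) ≤ y - (r0 - M)*s :=
      (le_div_iff₀ (by linarith : (0:ℝ) < s+1)).mp hδ2
    have hxM : 0 ≤ x - M := sub_nonneg.mpr hxI.1
    calc (x - M) * SG G x ≤ (x - M) * s := by nlinarith [SG_nonneg G x]
      _ ≤ (r0 - M + δ) * s := by nlinarith [hx.2]
      _ < y := by nlinarith

lemma Rstar_nonempty (hG : ProbOn01 G) (hM : M ∈ Set.Ico (0:ℝ) 1) :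
    (Rstar M G).Nonempty := by
  set f : ℝ → ℝ := fun r => (r - M) * SG G r with hf
  have hIcc : (Set.Icc M 1).Nonempty := Set.nonempty_Icc.mpr hM.2.le
  have hne : (f '' Set.Icc M 1).Nonempty := hIcc.image f
  have hub : ∀ z ∈ f '' Set.Icc M 1, z ≤ 1 - M := by
    rintro z ⟨r, hr, rfl⟩
    show (r - M) * SG G r ≤ 1 - M
    nlinarith [SG_nonneg G r, SG_le_one hG r, hr.1, hr.2]
  have hbdd : BddAbove (f '' Set.Icc M 1) := ⟨1 - M, hub⟩
  obtain ⟨w, hwmono, hwt, hwm⟩ := exists_seq_tendsto_sSup hne hbdd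
  simp only [Set.mem_image] at hwm
  choose x hx hfx using hwm
  obtain ⟨r, hrmem, φ, hφ, hconv⟩ := (isCompact_Icc).tendsto_subseq hx
  refine ⟨r, hrmem, fun r' hr' => ?_⟩
  have hwφ : Tendsto (fun n => w (φ n)) atTop (𝓝 (sSup (f '' Set.Icc M 1))) :=
    hwt.comp hφ.tendsto_atTop
  have hkey : ∀ y, f r < y → sSup (f '' Set.Icc M 1) ≤ y := by
    intro y hy
    have husc := profit_usc hG hM.1 hrmem hy
    have hconv' : Tendsto (fun n => x (φ n)) atTop (𝓝[Set.Icc M 1] r) :=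
      tendsto_nhdsWithin_of_tendsto_nhds_of_eventually_within _ hconv
        (Eventually.of_forall fun n => hx (φ n))
    have hev := hconv'.eventually husc
    refine le_of_tendsto hwφ ?_
    filter_upwards [hev] with n hn
    rw [← hfx (φ n)]
    exact hn.le
  have hA : sSup (f '' Set.Icc M 1) ≤ f r := by
    by_contra h
    push_neg at h
    obtain ⟨y, hy1, hy2⟩ := exists_between h
    exact absurd (hkey y hy1) (not_le.mpr hy2)
  calc f r' ≤ sSup (f '' Set.Icc M 1) := le_csSup hbdd ⟨r', hr', rfl⟩
    _ ≤ f r := hA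

lemma Rstar_compact (hG : ProbOn01 G) (hM : M ∈ Set.Ico (0:ℝ) 1) :
    IsCompact (Rstar M G) := by
  refine IsCompact.of_isClosed_subset isCompact_Icc ?_ (fun r hr => hr.1)
  refine IsSeqClosed.isClosed (fun x r hx hconv => ?_)
  have hrI : r ∈ Set.Icc M 1 := isClosed_Icc.mem_of_tendsto hconv
    (Eventually.of_forall fun n => (hx n).1)
  refine ⟨hrI, fun r' hr' => ?_⟩
  have hkey : ∀ y, (r - M) * SG G r < y → (r' - M) * SG G r' ≤ y := by
    intro y hy
    have husc := profit_usc hG hM.1 hrI hy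
    have hconv' : Tendsto x atTop (𝓝[Set.Icc M 1] r) :=
      tendsto_nhdsWithin_of_tendsto_nhds_of_eventually_within _ hconv
        (Eventually.of_forall fun n => (hx n).1)
    obtain ⟨n, hn⟩ := (hconv'.eventually husc).exists
    exact ((hx n).2 r' hr').trans hn.le
  by_contra h
  push_neg at h
  obtain ⟨y, hy1, hy2⟩ := exists_between h
  exact absurd (hkey y hy1) (not_le.mpr hy2)

end Rstar
/-- The optimal value of `t = log((1-M)/(r-M))`. -/
noncomputable def Topt (k : ℝ) : ℝ := if k ≤ 1/2 then 0 else (2*k-1)/k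

section Gkey

lemma Topt_nonneg {k : ℝ} (hk0 : 0 ≤ k) : 0 ≤ Topt k := by
  unfold Topt
  split_ifs with h
  · exact le_refl 0
  · push_neg at h
    exact div_nonneg (by linarith) (by linarith)

lemma Topt_coeff {k : ℝ} (hk1 : k ≤ 1) : 0 < k * Topt k + (1-k) := by
  unfold Topt
  split_ifs with h
  · nlinarith
  · push_neg at h
    rw [mul_div_cancel₀ _ (by linarith : k ≠ 0)]
    linarith

lemma gkey_lt {k t : ℝ} (hk0 : 0 ≤ k) (hk1 : k ≤ 1) (ht : 0 ≤ t) (hne : t ≠ Topt k) :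
    Real.exp (-t) * (k*t + (1-k)) < Real.exp (-(Topt k)) * (k*(Topt k) + (1-k)) := by
  have hept : 0 < Real.exp (-t) := Real.exp_pos _
  by_cases h : k ≤ 1/2
  · have hTeq : Topt k = 0 := if_pos h
    rw [hTeq] at hne ⊢
    have hx := Real.add_one_lt_exp (x := t) hne
    simp only [neg_zero, Real.exp_zero, mul_zero, zero_add, one_mul]
    have hk12 : (0:ℝ) < 1 - k := by linarith
    have h1 : k*t + (1-k) ≤ (1-k)*(t+1) := by nlinarith
    have h2 : (1-k)*(t+1) < Real.exp t * (1-k) := by nlinarith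
    have h3 : Real.exp (-t) * Real.exp t = 1 := by
      rw [← Real.exp_add]; simp
    nlinarith [mul_lt_mul_of_pos_left (h1.trans_lt h2) hept]
  · push_neg at h
    have hk : 0 < k := by linarith
    have hTeq : Topt k = (2*k-1)/k := if_neg (not_le.mpr h)
    set T := (2*k-1)/k with hT
    rw [hTeq] at hne ⊢
    have hx := Real.add_one_lt_exp (x := t - T) (sub_ne_zero.mpr hne)
    have hexp : Real.exp (-t) * Real.exp (t - T) = Real.exp (-T) := by
      rw [← Real.exp_add]; ring_nf
    have hkT : k * T = 2*k - 1 := mul_div_cancel₀ _ (by linarith)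
    have h1 : k*t + (1-k) = k*(1 + (t - T)) := by rw [mul_add, mul_sub, hkT]; ring
    have h2 : k*(1 + (t-T)) < k * Real.exp (t - T) := by nlinarith
    calc Real.exp (-t) * (k*t + (1-k)) < Real.exp (-t) * (k * Real.exp (t-T)) := by
          rw [h1]; exact mul_lt_mul_of_pos_left h2 hept
      _ = Real.exp (-T) * (k*T + (1-k)) := by
          rw [hkT, ← hexp]; ring

lemma gkey_le {k t : ℝ} (hk0 : 0 ≤ k) (hk1 : k ≤ 1) (ht : 0 ≤ t) :
    Real.exp (-t) * (k*t + (1-k)) ≤ Real.exp (-(Topt k)) * (k*(Topt k) + (1-k)) := by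
  by_cases hne : t = Topt k
  · rw [hne]
  · exact (gkey_lt hk0 hk1 ht hne).le

end Gkey
section Chain

variable {G : Measure ℝ} {Qbar M k : ℝ}

lemma integral_inv_shift {r : ℝ} (hM : M < r) (hr1 : r ≤ 1) :
    ∫ v in r..1, (v - M)⁻¹ = Real.log ((1-M)/(r-M)) := by
  have h1 : ∫ v in r..1, (v - M)⁻¹ = ∫ x in (r-M)..(1-M), x⁻¹ :=
    intervalIntegral.integral_comp_sub_right (fun x => x⁻¹) M
  rw [h1, integral_inv_of_pos (by linarith) (by linarith)]

/-- The main bound: chained inequality with equality analysis. -/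
lemma chain_bound (hQ : 0 < Qbar) (hM : M ∈ Set.Ico (0:ℝ) 1) (hk0 : 0 ≤ k) (hk1 : k ≤ 1)
    (hG : ProbOn01 G) {r : ℝ} (hr : r ∈ Rstar M G) :
    Jpp Qbar M k G r ≤ Qbar * (1-M) * (Real.exp (-(Topt k)) * (k * Topt k + (1-k))) ∧
    (Jpp Qbar M k G r = Qbar * (1-M) * (Real.exp (-(Topt k)) * (k * Topt k + (1-k))) →
      r = M + (1-M) * Real.exp (-(Topt k)) ∧ SG G r = 1 ∧
      (0 < k → (∫ v in r..1, SG G v) = (r - M) * Topt k)) := by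
  haveI := hG.1
  obtain ⟨⟨hrM, hr1⟩, hopt⟩ := hr
  have h1M : 0 < 1 - M := by linarith [hM.2]
  have hVpos : 0 < Qbar * (1-M) * (Real.exp (-(Topt k)) * (k * Topt k + (1-k))) := by
    have := Topt_coeff (k := k) hk1
    positivity
  set Vk := Qbar * (1-M) * (Real.exp (-(Topt k)) * (k * Topt k + (1-k))) with hVk
  set c := (r - M) * SG G r with hc
  have hc0 : 0 ≤ c := mul_nonneg (by linarith) (SG_nonneg G r)
  by_cases hczero : c = 0
  · -- degenerate case : J = 0 < Vk
    have hPi : PiG Qbar M G r = 0 := by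
      unfold PiG
      rw [mul_assoc, ← hc, hczero, mul_zero]
    have hCS : CSG Qbar G r = 0 := by
      have hz : ∀ v ∈ Set.Ioc r 1, SG G v = 0 := by
        intro v hv
        have h2 := hopt v ⟨hrM.trans hv.1.le, hv.2⟩
        rw [hczero] at h2
        have hvM : 0 < v - M := by linarith [hv.1]
        nlinarith [SG_nonneg G v]
      unfold CSG
      rw [intervalIntegral.integral_of_le hr1,
        MeasureTheory.setIntegral_congr_fun measurableSet_Ioc hz]
      simp
    have hJ0 : Jpp Qbar M k G r = 0 := by
      unfold Jpp
      rw [hPi, hCS]; ring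
    rw [hJ0]
    exact ⟨hVpos.le, fun h => absurd h.symm (ne_of_gt hVpos)⟩
  · have hcpos : 0 < c := lt_of_le_of_ne hc0 (Ne.symm hczero)
    have hrM' : M < r := by
      rcases eq_or_lt_of_le hrM with h | h
      · exfalso; apply hczero; rw [hc, ← h]; ring
      · exact h
    have hrMpos : 0 < r - M := by linarith
    have hSr1 : SG G r ≤ 1 := SG_le_one hG r
    set t := Real.log ((1-M)/(r-M)) with hts
    have htnn : 0 ≤ t := Real.log_nonneg ((one_le_div hrMpos).mpr (by linarith))
    have hexp : Real.exp (-t) = (r-M)/(1-M) := by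
      rw [hts, ← Real.log_inv, inv_div, Real.exp_log (by positivity)]
    have hSint : IntervalIntegrable (SG G) volume r 1 := SG_intervalIntegrable hG r 1
    have hgint : IntervalIntegrable (fun v => c * (v - M)⁻¹) volume r 1 := by
      apply ContinuousOn.intervalIntegrable
      apply continuousOn_const.mul
      apply ContinuousOn.inv₀ (by fun_prop)
      intro v hv
      rw [Set.uIcc_of_le hr1] at hv
      have h5 := hv.1
      intro hvM
      have : v = M := by linarith [sub_eq_zero.mp hvM]
      linarith
    have hptwise : ∀ v ∈ Set.Icc r 1, SG G v ≤ c * (v - M)⁻¹ := by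
      intro v hv
      have hvM : 0 < v - M := by linarith [hv.1]
      have h2 := hopt v ⟨hrM.trans hv.1, hv.2⟩
      have h3 : SG G v ≤ c / (v - M) := (le_div_iff₀ hvM).mpr (by nlinarith)
      rw [div_eq_mul_inv] at h3
      exact h3
    have hIle : (∫ v in r..1, SG G v) ≤ c * t := by
      have h3 : (∫ v in r..1, SG G v) ≤ ∫ v in r..1, c * (v-M)⁻¹ :=
        intervalIntegral.integral_mono_on hr1 hSint hgint hptwise
      have h4 : (∫ v in r..1, c * (v-M)⁻¹) = c * t := by
        rw [intervalIntegral.integral_const_mul, integral_inv_shift hrM' hr1]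
      linarith
    have hJform : Jpp Qbar M k G r
        = k * (Qbar * ∫ v in r..1, SG G v) + (1-k) * (Qbar * c) := by
      unfold Jpp CSG PiG; rw [hc]; ring
    have hX1 : Jpp Qbar M k G r ≤ Qbar * c * (k*t + (1-k)) := by
      rw [hJform]
      have h5 := mul_le_mul_of_nonneg_left hIle (mul_nonneg hk0 hQ.le)
      nlinarith [mul_nonneg hQ.le hc0]
    have hcle : c ≤ r - M := by nlinarith
    have hApos : 0 ≤ k*t + (1-k) := by nlinarith
    have hX2 : Qbar * c * (k*t+(1-k)) ≤ Qbar * (r-M) * (k*t+(1-k)) :=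
      mul_le_mul_of_nonneg_right (mul_le_mul_of_nonneg_left hcle hQ.le) hApos
    have hX3 : Qbar * (r-M) * (k*t+(1-k)) = Qbar * (1-M) * (Real.exp (-t) * (k*t+(1-k))) := by
      rw [hexp]
      field_simp
    have hgle := gkey_le (k := k) (t := t) hk0 hk1 htnn
    have hQ1M : 0 < Qbar * (1-M) := by positivity
    have hfinal : Jpp Qbar M k G r ≤ Vk := by
      rw [hVk]
      calc Jpp Qbar M k G r ≤ Qbar * c * (k*t+(1-k)) := hX1
        _ ≤ Qbar * (r-M) * (k*t+(1-k)) := hX2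
        _ = Qbar * (1-M) * (Real.exp (-t) * (k*t+(1-k))) := hX3
        _ ≤ Qbar * (1-M) * (Real.exp (-(Topt k)) * (k * Topt k + (1-k))) :=
            mul_le_mul_of_nonneg_left hgle hQ1M.le
    refine ⟨hfinal, fun hJV => ?_⟩
    have htT : t = Topt k := by
      by_contra hne
      have hstrict := gkey_lt hk0 hk1 htnn hne
      have hlt : Jpp Qbar M k G r < Vk := by
        rw [hVk]
        calc Jpp Qbar M k G r ≤ Qbar * c * (k*t+(1-k)) := hX1
          _ ≤ Qbar * (r-M) * (k*t+(1-k)) := hX2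
          _ = Qbar * (1-M) * (Real.exp (-t) * (k*t+(1-k))) := hX3
          _ < Qbar * (1-M) * (Real.exp (-(Topt k)) * (k * Topt k + (1-k))) :=
              mul_lt_mul_of_pos_left hstrict hQ1M
      exact absurd hJV (ne_of_lt hlt)
    have hrropt : r = M + (1-M) * Real.exp (-(Topt k)) := by
      rw [← htT, hexp]
      field_simp
      ring
    have hApos' : 0 < k * t + (1-k) := by rw [htT]; exact Topt_coeff hk1
    have hX3V : Qbar * (r-M) * (k*t+(1-k)) = Vk := by
      rw [hX3, hVk, htT]
    have hSr : SG G r = 1 := by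
      by_contra hS
      have hSlt : SG G r < 1 := lt_of_le_of_ne hSr1 hS
      have hclt : c < r - M := by nlinarith
      have hlt : Jpp Qbar M k G r < Vk := by
        calc Jpp Qbar M k G r ≤ Qbar * c * (k*t+(1-k)) := hX1
          _ < Qbar * (r-M) * (k*t+(1-k)) :=
              mul_lt_mul_of_pos_right (mul_lt_mul_of_pos_left hclt hQ) hApos'
          _ = Vk := hX3V
      exact absurd hJV (ne_of_lt hlt)
    have hceq : c = r - M := by rw [hc, hSr, mul_one]
    refine ⟨hrropt, hSr, fun hkpos => ?_⟩
    have hVeq : Vk = k * (Qbar * (c*t)) + (1-k) * (Qbar * c) := by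
      rw [← hX3V, hceq]; ring
    have hJV' := hJform ▸ hJV
    have hmain : k * (Qbar * (∫ v in r..1, SG G v)) = k * (Qbar * (c*t)) := by
      linarith [hJV', hVeq]
    have h6 : (∫ v in r..1, SG G v) = c * t := by
      have hkQ : (0:ℝ) < k * Qbar := mul_pos hkpos hQ
      have : (k * Qbar) * (∫ v in r..1, SG G v) = (k * Qbar) * (c*t) := by
        linarith [hmain]
      exact mul_left_cancel₀ (ne_of_gt hkQ) this
    rw [h6, hceq, htT]

end Chain
section Dirac

variable {G : Measure ℝ} {M k : ℝ}

lemma probOn01_dirac : ProbOn01 (Measure.dirac (1:ℝ)) := by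
  refine ⟨by infer_instance, ?_⟩
  rw [Measure.dirac_apply' _ measurableSet_Icc]
  simp [Set.indicator_of_mem (by norm_num : (1:ℝ) ∈ Set.Icc (0:ℝ) 1)]

lemma SG_dirac {v : ℝ} (hv : v ≤ 1) : SG (Measure.dirac (1:ℝ)) v = 1 := by
  unfold SG
  rw [Measure.dirac_apply' _ measurableSet_Icc,
    Set.indicator_of_mem (by exact ⟨hv, le_refl 1⟩ : (1:ℝ) ∈ Set.Icc v 1)]
  simp

lemma one_mem_Rstar_dirac (hM : M ∈ Set.Ico (0:ℝ) 1) :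
    (1:ℝ) ∈ Rstar M (Measure.dirac 1) := by
  refine ⟨⟨hM.2.le, le_refl 1⟩, fun r' hr' => ?_⟩
  rw [SG_dirac hr'.2, SG_dirac (le_refl 1)]
  nlinarith [hr'.2]

lemma Jpp_dirac (Qbar : ℝ) (hM : M ∈ Set.Ico (0:ℝ) 1) :
    Jpp Qbar M k (Measure.dirac 1) 1 = (1-k) * (Qbar * (1 - M)) := by
  unfold Jpp CSG PiG
  rw [intervalIntegral.integral_same, SG_dirac (le_refl 1)]
  ring

lemma eq_dirac_of_atom_one (hG : ProbOn01 G) (h1 : G {1} = 1) : G = Measure.dirac 1 := by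
  haveI := hG.1
  have hcompl : G ({(1:ℝ)}ᶜ) = 0 := by
    rw [measure_compl (measurableSet_singleton 1) (measure_ne_top G _), h1, measure_univ]
    simp
  ext s hs
  rw [Measure.dirac_apply' _ hs]
  by_cases h : (1:ℝ) ∈ s
  · rw [Set.indicator_of_mem h]
    refine le_antisymm prob_le_one ?_
    calc (1:ENNReal) = G {1} := h1.symm
      _ ≤ G s := measure_mono (Set.singleton_subset_iff.mpr h)
  · have hGs : G s = 0 := by
      refine measure_mono_null ?_ hcompl
      intro x hx
      simp only [Set.mem_compl_iff, Set.mem_singleton_iff]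
      rintro rfl
      exact h hx
    rw [hGs]
    simp [h]

lemma SG_one_eq_atom (hG : ProbOn01 G) (h : SG G 1 = 1) : G {1} = 1 := by
  haveI := hG.1
  have : SG G 1 = (G {1}).toReal := by
    unfold SG
    rw [Set.Icc_self]
  rw [this] at h
  exact (ENNReal.toReal_eq_one_iff _).mp h

end Dirac
section CDF

variable {G : Measure ℝ} {M : ℝ}

lemma Iio_toReal_eq (hG : ProbOn01 G) {v L : ℝ}
    (hlim : Tendsto (fun n : ℕ => (G (Set.Iic (v - 1/(n+1)))).toReal) atTop (𝓝 L)) :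
    (G (Set.Iio v)).toReal = L := by
  haveI := hG.1
  have hmono : Monotone (fun n : ℕ => Set.Iic (v - 1/((n:ℝ)+1))) := by
    intro n m hnm
    apply Set.Iic_subset_Iic.mpr
    have h1 : (0:ℝ) < n + 1 := by positivity
    have h2 : (n:ℝ) + 1 ≤ m + 1 := by exact_mod_cast by omega
    have := div_le_div_of_nonneg_left (by norm_num : (0:ℝ) ≤ 1) h1 h2
    linarith
  have hset : ⋃ n : ℕ, Set.Iic (v - 1/((n:ℝ)+1)) = Set.Iio v := by
    ext x
    simp only [Set.mem_iUnion, Set.mem_Iic, Set.mem_Iio]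
    constructor
    · rintro ⟨n, hn⟩
      have : (0:ℝ) < 1/((n:ℝ)+1) := by positivity
      linarith
    · intro hx
      obtain ⟨n, hn⟩ := exists_nat_one_div_lt (show (0:ℝ) < v - x by linarith)
      exact ⟨n, by linarith⟩
  have h2 := tendsto_measure_iUnion_atTop (μ := G) hmono
  rw [hset] at h2
  have h3 := (ENNReal.tendsto_toReal (measure_ne_top G _)).comp h2
  exact tendsto_nhds_unique h3 hlim

/-- Recover the survival function from the CDF. -/
lemma SG_of_cdf (hG : ProbOn01 G) {a : ℝ} (haM : M < a) (ha1 : a < 1)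
    (hCDF : ∀ v, (G (Set.Iic v)).toReal
      = if v < a then 0 else if v < 1 then 1 - (a-M)/(v-M) else 1) :
    ∀ v, v ≤ 1 → SG G v = if v ≤ a then 1 else (a-M)/(v-M) := by
  intro v hv1
  haveI := hG.1
  have hIio : (G (Set.Iio v)).toReal = if v ≤ a then 0 else 1 - (a-M)/(v-M) := by
    apply Iio_toReal_eq hG
    by_cases hva : v ≤ a
    · rw [if_pos hva]
      have hz : ∀ n : ℕ, (G (Set.Iic (v - 1/((n:ℝ)+1)))).toReal = 0 := by
        intro n
        rw [hCDF, if_pos]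
        have : (0:ℝ) < 1/((n:ℝ)+1) := by positivity
        linarith
      exact tendsto_const_nhds.congr fun n => (hz n).symm
    · push_neg at hva
      rw [if_neg (not_le.mpr hva)]
      have hev : ∀ᶠ n : ℕ in atTop, (G (Set.Iic (v - 1/((n:ℝ)+1)))).toReal
          = 1 - (a-M)/(v - 1/((n:ℝ)+1) - M) := by
        obtain ⟨N, hN⟩ := exists_nat_one_div_lt (show (0:ℝ) < v - a by linarith)
        filter_upwards [eventually_ge_atTop N] with n hn
        have h1 : (0:ℝ) < (N:ℝ) + 1 := by positivity
        have h2 : ((N:ℝ)+1) ≤ (n:ℝ)+1 := by exact_mod_cast by omega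
        have h3 : 1/((n:ℝ)+1) ≤ 1/((N:ℝ)+1) :=
          div_le_div_of_nonneg_left (by norm_num) h1 h2
        have h4 : (0:ℝ) < 1/((n:ℝ)+1) := by positivity
        rw [hCDF, if_neg (by push_neg; linarith), if_pos (by linarith)]
      have hcont : Tendsto (fun n : ℕ => 1 - (a-M)/(v - 1/((n:ℝ)+1) - M)) atTop
          (𝓝 (1 - (a-M)/(v-M))) := by
        have h1 : Tendsto (fun n : ℕ => v - 1/((n:ℝ)+1)) atTop (𝓝 v) := tendsto_sub_div v 1
        have h2 : Tendsto (fun n : ℕ => v - 1/((n:ℝ)+1) - M) atTop (𝓝 (v - M)) :=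
          h1.sub_const M
        have hbne : v - M ≠ 0 := by
          intro h
          have hvM : v = M := by linarith
          linarith
        have h3 : Tendsto (fun n : ℕ => (a-M)/(v - 1/((n:ℝ)+1) - M)) atTop
            (𝓝 ((a-M)/(v-M))) := Filter.Tendsto.div tendsto_const_nhds h2 hbne
        exact tendsto_const_nhds.sub h3
      exact hcont.congr' (hev.mono fun n h => h.symm)
  have hdiff : Set.Icc v 1 = Set.Iic 1 \ Set.Iio v := by ext x; simp [and_comm]
  have hIic1 : G (Set.Iic 1) = 1 := by
    apply (ENNReal.toReal_eq_one_iff _).mp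
    rw [hCDF, if_neg (by linarith), if_neg (lt_irrefl 1)]
  have hsub : Set.Iio v ⊆ Set.Iic 1 := fun x hx => le_trans (le_of_lt hx) hv1
  have hle : G (Set.Iio v) ≤ G (Set.Iic 1) := measure_mono hsub
  unfold SG
  rw [hdiff, measure_diff hsub nullMeasurableSet_Iio (measure_ne_top G _),
    ENNReal.toReal_sub_of_le hle (measure_ne_top G _)]
  have h1 : (G (Set.Iic 1)).toReal = 1 := by rw [hIic1]; simp
  rw [h1, hIio]
  split_ifs with h
  · norm_num
  · ring

/-- Recover the CDF from the survival function. -/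
lemma cdf_of_SG (hG : ProbOn01 G) {a : ℝ} (haM : M < a) (ha1 : a < 1)
    (hS : ∀ v, v ≤ 1 → SG G v = if v ≤ a then 1 else (a-M)/(v-M)) :
    ∀ v, (G (Set.Iic v)).toReal
      = if v < a then 0 else if v < 1 then 1 - (a-M)/(v-M) else 1 := by
  intro v
  haveI := hG.1
  by_cases hv1 : 1 ≤ v
  · rw [if_neg (by linarith), if_neg (by linarith)]
    have h1 : G (Set.Iic v) = 1 := by
      refine le_antisymm prob_le_one ?_
      rw [← hG.2]
      exact measure_mono (fun x hx => le_trans hx.2 hv1)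
    rw [h1]; simp
  push_neg at hv1
  by_cases hva : v < a
  · rw [if_pos hva]
    have hS_a : SG G a = 1 := by rw [hS a ha1.le, if_pos le_rfl]
    have hGa : G (Set.Icc a 1) = 1 := (ENNReal.toReal_eq_one_iff _).mp hS_a
    have hIic0 : G (Set.Iic v) = 0 := by
      have hc : G (Set.Icc a 1)ᶜ = 0 := by
        rw [measure_compl measurableSet_Icc (measure_ne_top G _), hGa, measure_univ]
        simp
      refine measure_mono_null ?_ hc
      intro x hx
      simp only [Set.mem_compl_iff, Set.mem_Icc, not_and_or, not_le]
      left; exact lt_of_le_of_lt hx hva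
    rw [hIic0]; simp
  · push_neg at hva
    rw [if_neg (not_lt.mpr hva), if_pos hv1]
    have hanti : Antitone (fun n : ℕ => v + (1-v)/((n:ℝ)+1)) := by
      intro n m hnm
      have h1 : (0:ℝ) < n + 1 := by positivity
      have h2 : ((n:ℝ)+1) ≤ (m:ℝ)+1 := by exact_mod_cast by omega
      have := div_le_div_of_nonneg_left (by linarith : (0:ℝ) ≤ 1 - v) h1 h2
      simp only
      linarith
    have hgt : ∀ n : ℕ, v < v + (1-v)/((n:ℝ)+1) := by
      intro n
      have : (0:ℝ) < (1-v)/((n:ℝ)+1) := div_pos (by linarith) (by positivity)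
      linarith
    have hlim := SG_tendsto_right hG hanti hgt (tendsto_add_div v (1-v))
    have hev : ∀ n : ℕ, SG G (v + (1-v)/((n:ℝ)+1)) = (a-M)/(v + (1-v)/((n:ℝ)+1) - M) := by
      intro n
      have hle1 : v + (1-v)/((n:ℝ)+1) ≤ 1 := by
        have := div_le_self (by linarith : (0:ℝ) ≤ 1-v) (by norm_num : (1:ℝ) ≤ (n:ℝ)+1)
        linarith
      rw [hS _ hle1, if_neg (not_le.mpr (lt_of_le_of_lt hva (hgt n)))]
    have hcont : Tendsto (fun n : ℕ => (a-M)/(v + (1-v)/((n:ℝ)+1) - M)) atTop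
        (𝓝 ((a-M)/(v-M))) := by
      have h2 : Tendsto (fun n : ℕ => v + (1-v)/((n:ℝ)+1) - M) atTop (𝓝 (v - M)) :=
        (tendsto_add_div v (1-v)).sub_const M
      have hbne : v - M ≠ 0 := by
        intro h
        have hvM : v = M := by linarith
        linarith
      exact Filter.Tendsto.div tendsto_const_nhds h2 hbne
    have hlim2 : Tendsto (fun n : ℕ => SG G (v + (1-v)/((n:ℝ)+1))) atTop
        (𝓝 ((a-M)/(v-M))) := hcont.congr fun n => (hev n).symm
    have hIoc : (G (Set.Ioc v 1)).toReal = (a-M)/(v-M) := tendsto_nhds_unique hlim hlim2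
    rw [cdf_eq_one_sub hG, meas_Ioi_eq_Ioc hG, hIoc]

end CDF
section AE

variable {G : Measure ℝ} {M : ℝ}

lemma g_intervalIntegrable {a c : ℝ} (haM : M < a) (ha1 : a ≤ 1) :
    IntervalIntegrable (fun v => c * (v - M)⁻¹) volume a 1 := by
  apply ContinuousOn.intervalIntegrable
  apply continuousOn_const.mul
  apply ContinuousOn.inv₀ (by fun_prop)
  intro v hv
  rw [Set.uIcc_of_le ha1] at hv
  intro hvM
  have hv1 := hv.1
  have : v = M := by linarith [sub_eq_zero.mp hvM]
  linarith

lemma ae_eq_of_integral_eq (hG : ProbOn01 G) {a : ℝ} (haM : M < a) (ha1 : a ≤ 1)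
    (hle : ∀ v ∈ Set.Icc a 1, SG G v ≤ (a-M) * (v-M)⁻¹)
    (hint : (∫ v in a..1, SG G v) = ∫ v in a..1, (a-M) * (v-M)⁻¹) :
    ∀ᵐ x ∂(volume.restrict (Set.Ioc a 1)), SG G x = (a-M) * (x-M)⁻¹ := by
  set g : ℝ → ℝ := fun v => (a-M) * (v-M)⁻¹ with hg
  have hgint : IntegrableOn g (Set.Ioc a 1) volume := (g_intervalIntegrable haM ha1).1
  have hSint : IntegrableOn (SG G) (Set.Ioc a 1) volume := (SG_intervalIntegrable hG a 1).1
  have hsub : Integrable (fun x => g x - SG G x) (volume.restrict (Set.Ioc a 1)) :=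
    hgint.sub hSint
  have hnn : 0 ≤ᵐ[volume.restrict (Set.Ioc a 1)] fun x => g x - SG G x := by
    rw [Filter.EventuallyLE, ae_restrict_iff' measurableSet_Ioc]
    exact Eventually.of_forall fun x hx =>
      sub_nonneg.mpr (hle x ⟨hx.1.le, hx.2⟩)
  have hzero : ∫ x in Set.Ioc a 1, (g x - SG G x) = 0 := by
    rw [MeasureTheory.integral_sub hgint hSint]
    have h1 : ∫ x in Set.Ioc a 1, g x = ∫ v in a..1, g v :=
      (intervalIntegral.integral_of_le ha1).symm
    have h2 : ∫ x in Set.Ioc a 1, SG G x = ∫ v in a..1, SG G v :=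
      (intervalIntegral.integral_of_le ha1).symm
    rw [h1, h2, ← hint]
    ring
  have hae := (MeasureTheory.integral_eq_zero_iff_of_nonneg_ae hnn hsub).mp hzero
  filter_upwards [hae] with x hx
  have h2 : g x = SG G x := sub_eq_zero.mp hx
  exact h2.symm

lemma SG_eq_on_Ioc (hG : ProbOn01 G) {a : ℝ} (haM : M < a) (ha1 : a ≤ 1)
    (hle : ∀ v ∈ Set.Icc a 1, SG G v ≤ (a-M) * (v-M)⁻¹)
    (hae : ∀ᵐ x ∂(volume.restrict (Set.Ioc a 1)), SG G x = (a-M) * (x-M)⁻¹) :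
    ∀ v ∈ Set.Ioc a 1, SG G v = (a-M) / (v-M) := by
  have hbad : volume ({x | SG G x ≠ (a-M) * (x-M)⁻¹} ∩ Set.Ioc a 1) = 0 := by
    have h1 : ∀ᵐ x ∂volume, x ∈ Set.Ioc a 1 → SG G x = (a-M) * (x-M)⁻¹ :=
      (ae_restrict_iff' measurableSet_Ioc).mp hae
    rw [ae_iff] at h1
    refine measure_mono_null ?_ h1
    intro x hx
    simp only [Set.mem_inter_iff, Set.mem_setOf_eq] at hx ⊢
    push_neg
    exact ⟨hx.2, hx.1⟩
  intro v hv
  have hvM : 0 < v - M := by linarith [hv.1]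
  rw [div_eq_mul_inv]
  refine le_antisymm (hle v ⟨hv.1.le, hv.2⟩) ?_
  set e := (v - a)/2 with he
  have he0 : 0 < e := by
    have := hv.1
    simp only [he]
    linarith
  have hmono : Monotone (fun n : ℕ => v - e/((n:ℝ)+1)) := by
    intro n m hnm
    have h1 : (0:ℝ) < n + 1 := by positivity
    have h2 : ((n:ℝ)+1) ≤ (m:ℝ)+1 := by exact_mod_cast by omega
    have := div_le_div_of_nonneg_left he0.le h1 h2
    simp only
    linarith
  have hle' : ∀ n : ℕ, v - e/((n:ℝ)+1) ≤ v := by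
    intro n
    have : (0:ℝ) ≤ e/((n:ℝ)+1) := by positivity
    linarith
  have hgta : ∀ n : ℕ, a < v - e/((n:ℝ)+1) := by
    intro n
    have h1 : e/((n:ℝ)+1) ≤ e := div_le_self he0.le (by norm_num)
    have := hv.1
    simp only [he] at h1 ⊢
    linarith
  have hSlim := SG_tendsto_left hG hmono hle' (tendsto_sub_div v e)
  refine ge_of_tendsto hSlim (Eventually.of_forall fun n => ?_)
  -- find a good point w in (v - e/(n+1), v)
  set u := v - e/((n:ℝ)+1) with hu
  have huv : u < v := by
    have : (0:ℝ) < e/((n:ℝ)+1) := by positivity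
    simp only [hu]
    linarith
  have hIoo_pos : volume (Set.Ioo u v) ≠ 0 := by
    rw [Real.volume_Ioo]
    simp only [ne_eq, ENNReal.ofReal_eq_zero, not_le]
    linarith
  have hsubset : ¬ (Set.Ioo u v ⊆ {x | SG G x ≠ (a-M) * (x-M)⁻¹} ∩ Set.Ioc a 1) := by
    intro hs
    exact hIoo_pos (measure_mono_null hs hbad)
  obtain ⟨w, hw, hwn⟩ := Set.not_subset.mp hsubset
  have hw_mem : w ∈ Set.Ioc a 1 := ⟨(hgta n).trans hw.1, (hw.2.trans_le hv.2).le⟩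
  have hweq : SG G w = (a-M) * (w-M)⁻¹ := by
    by_contra hne
    exact hwn ⟨hne, hw_mem⟩
  have hwM : 0 < w - M := by linarith [hw_mem.1]
  calc (a-M) * (v-M)⁻¹ ≤ (a-M) * (w-M)⁻¹ := by
        rw [← div_eq_mul_inv, ← div_eq_mul_inv]
        exact div_le_div_of_nonneg_left (by linarith) hwM (by linarith [hw.2])
    _ = SG G w := hweq.symm
    _ ≤ SG G u := SG_anti hG hw.1.le
end AE
section Candidate

variable {Gk : Measure ℝ} {Qbar M k : ℝ}

lemma Topt_eq_of_gt {k : ℝ} (hk : 1/2 < k) : Topt k = (2*k-1)/k :=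
  if_neg (not_le.mpr hk)

lemma rk_eq (M k : ℝ) : rkFun M k = M + (1-M) * Real.exp (-(Topt k)) ∨ k ≤ 1/2 := by
  by_cases hk : k ≤ 1/2
  · exact Or.inr hk
  · left
    rw [rkFun, Topt_eq_of_gt (not_le.mp hk), neg_div]

lemma rk_eq' {M k : ℝ} (hk : 1/2 < k) : rkFun M k = M + (1-M) * Real.exp (-(Topt k)) := by
  rw [rkFun, Topt_eq_of_gt hk, neg_div]

lemma Topt_pos {k : ℝ} (hk : 1/2 < k) : 0 < Topt k := by
  rw [Topt_eq_of_gt hk]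
  apply div_pos <;> linarith

lemma rk_mem_Ioo (hM : M ∈ Set.Ico (0:ℝ) 1) {k : ℝ} (hk : 1/2 < k) :
    rkFun M k ∈ Set.Ioo M 1 := by
  have h1M : 0 < 1 - M := by linarith [hM.2]
  have hT := Topt_pos hk
  have he1 : Real.exp (-(Topt k)) < 1 := by
    calc Real.exp (-(Topt k)) < Real.exp 0 := Real.exp_lt_exp.mpr (by linarith)
      _ = 1 := Real.exp_zero
  have he0 : 0 < Real.exp (-(Topt k)) := Real.exp_pos _
  rw [rk_eq' hk]
  constructor
  · nlinarith
  · nlinarith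

lemma rk_log (hM : M ∈ Set.Ico (0:ℝ) 1) {k : ℝ} (hk : 1/2 < k) :
    Real.log ((1-M)/(rkFun M k - M)) = Topt k := by
  have h1M : 0 < 1 - M := by linarith [hM.2]
  have hsub : rkFun M k - M = (1-M) * Real.exp (-(Topt k)) := by
    rw [rk_eq' hk]; ring
  rw [hsub, Real.exp_neg]
  rw [div_mul_eq_div_div, div_self (ne_of_gt h1M), one_div, inv_inv, Real.log_exp]

lemma rk_mem_Rstar (hGk : ProbOn01 Gk) (hM : M ∈ Set.Ico (0:ℝ) 1) {k : ℝ} (hk : 1/2 < k)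
    (hS : ∀ v, v ≤ 1 → SG Gk v = if v ≤ rkFun M k then 1 else (rkFun M k - M)/(v - M)) :
    rkFun M k ∈ Rstar M Gk := by
  obtain ⟨haM, ha1⟩ := rk_mem_Ioo hM hk
  refine ⟨⟨haM.le, ha1.le⟩, fun r' hr' => ?_⟩
  rw [hS _ ha1.le, if_pos le_rfl, hS r' hr'.2]
  split_ifs with h
  · nlinarith [hr'.1]
  · push_neg at h
    have hr'M : 0 < r' - M := by linarith
    rw [mul_comm, div_mul_cancel₀ _ (ne_of_gt hr'M)]
    nlinarith

lemma CS_at_rk (hGk : ProbOn01 Gk) (hQ : 0 < Qbar) (hM : M ∈ Set.Ico (0:ℝ) 1) {k : ℝ}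
    (hk : 1/2 < k)
    (hS : ∀ v, v ≤ 1 → SG Gk v = if v ≤ rkFun M k then 1 else (rkFun M k - M)/(v - M)) :
    CSG Qbar Gk (rkFun M k) = Qbar * ((rkFun M k - M) * Topt k) := by
  obtain ⟨haM, ha1⟩ := rk_mem_Ioo hM hk
  set a := rkFun M k with ha
  have hcongr : ∀ v ∈ Set.uIcc a 1, SG Gk v = (a-M) * (v-M)⁻¹ := by
    intro v hv
    rw [Set.uIcc_of_le ha1.le] at hv
    rw [hS v hv.2]
    split_ifs with h
    · have hva : v = a := le_antisymm h hv.1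
      rw [hva, mul_inv_cancel₀ (by intro h0; rw [sub_eq_zero] at h0; linarith)]
    · rw [div_eq_mul_inv]
  unfold CSG
  rw [intervalIntegral.integral_congr hcongr, intervalIntegral.integral_const_mul,
    integral_inv_shift haM ha1.le, rk_log hM hk]

lemma Pi_at_rk (hGk : ProbOn01 Gk) (hM : M ∈ Set.Ico (0:ℝ) 1) {k : ℝ} (hk : 1/2 < k)
    (hS : ∀ v, v ≤ 1 → SG Gk v = if v ≤ rkFun M k then 1 else (rkFun M k - M)/(v - M)) :
    PiG Qbar M Gk (rkFun M k) = Qbar * (rkFun M k - M) := by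
  obtain ⟨haM, ha1⟩ := rk_mem_Ioo hM hk
  unfold PiG
  rw [hS _ ha1.le, if_pos le_rfl, mul_one]

end Candidate

/-- (i) `R*(G)` is nonempty and compact for every Borel probability
measure `G` on `[0,1]`; (ii) for `k ∈ [0,1/2]`, `V_k^{pp} = Q̄(1−k)(1−M)` and the
unique maximizing pair is `(δ₁, 1)`; (iii) for `k ∈ (1/2,1]`, with
`r_k = M + (1−M)e^{−(2k−1)/k}` and `G_k` the shifted equal-revenue distribution with
CDF `GkCDF`, the pair `(G_k, r_k)` is the unique maximizer,
`V_k^{pp} = Q̄·k·(1−M)·e^{−(2k−1)/k}`, `Π_{G_k}(r_k) = Q̄(1−M)e^{−(2k−1)/k}` and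
`CS_{G_k}(r_k) = Q̄(1−M)e^{−(2k−1)/k}·(2k−1)/k`. -/
theorem posted_price_optimal_market
    (Qbar M : ℝ) (hQbar : 0 < Qbar) (hM : M ∈ Set.Ico (0:ℝ) 1) :
    -- (i)
    (∀ G : Measure ℝ, ProbOn01 G → (Rstar M G).Nonempty ∧ IsCompact (Rstar M G)) ∧
    -- (ii)
    (∀ k ∈ Set.Icc (0:ℝ) (1/2),
      Vpp Qbar M k = Qbar * (1 - k) * (1 - M) ∧
      ((1:ℝ) ∈ Rstar M (Measure.dirac 1) ∧
        Jpp Qbar M k (Measure.dirac 1) 1 = Vpp Qbar M k) ∧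
      (∀ G : Measure ℝ, ProbOn01 G → ∀ r ∈ Rstar M G,
        Jpp Qbar M k G r = Vpp Qbar M k → G = Measure.dirac 1 ∧ r = 1)) ∧
    -- (iii)
    (∀ k ∈ Set.Ioc (1/2 : ℝ) 1,
      rkFun M k ∈ Set.Ioo M 1 ∧
      ∀ Gk : Measure ℝ, ProbOn01 Gk →
        (∀ v : ℝ, (Gk (Set.Iic v)).toReal = GkCDF M k v) →
        (rkFun M k ∈ Rstar M Gk ∧
         Jpp Qbar M k Gk (rkFun M k) = Vpp Qbar M k ∧
         Vpp Qbar M k = Qbar * k * (1 - M) * Real.exp (-(2*k - 1)/k) ∧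
         PiG Qbar M Gk (rkFun M k) = Qbar * (1 - M) * Real.exp (-(2*k - 1)/k) ∧
         CSG Qbar Gk (rkFun M k)
           = Qbar * (1 - M) * Real.exp (-(2*k - 1)/k) * ((2*k - 1)/k) ∧
         (∀ G : Measure ℝ, ProbOn01 G → ∀ r ∈ Rstar M G,
           Jpp Qbar M k G r = Vpp Qbar M k → G = Gk ∧ r = rkFun M k))) := by
  have hM1 : M < 1 := hM.2
  have h1M : 0 < 1 - M := by linarith
  refine ⟨fun G hG => ⟨Rstar_nonempty hG hM, Rstar_compact hG hM⟩, ?_, ?_⟩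
  · -- part (ii)
    rintro k ⟨hk0, hk12⟩
    have hk1 : k ≤ 1 := by linarith
    have hT0 : Topt k = 0 := if_pos hk12
    have hVk : Qbar * (1-M) * (Real.exp (-(Topt k)) * (k * Topt k + (1-k)))
        = Qbar * (1-k) * (1-M) := by
      rw [hT0]
      simp [Real.exp_zero]
      ring
    have hub : ∀ x ∈ {x | ∃ G : Measure ℝ, ProbOn01 G ∧ ∃ r ∈ Rstar M G,
        x = Jpp Qbar M k G r}, x ≤ Qbar * (1-k) * (1-M) := by
      rintro x ⟨G, hG, r, hr, rfl⟩
      have h1 := (chain_bound hQbar hM hk0 hk1 hG hr).1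
      rw [hVk] at h1
      exact h1
    have hJd : Jpp Qbar M k (Measure.dirac 1) 1 = Qbar * (1-k) * (1-M) := by
      rw [Jpp_dirac Qbar hM]; ring
    have hmem : Qbar * (1-k) * (1-M) ∈ {x | ∃ G : Measure ℝ, ProbOn01 G ∧
        ∃ r ∈ Rstar M G, x = Jpp Qbar M k G r} :=
      ⟨Measure.dirac 1, probOn01_dirac, 1, one_mem_Rstar_dirac hM, hJd.symm⟩
    have hVpp : Vpp Qbar M k = Qbar * (1-k) * (1-M) := by
      unfold Vpp
      exact le_antisymm (csSup_le ⟨_, hmem⟩ hub) (le_csSup ⟨_, hub⟩ hmem)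
    refine ⟨hVpp, ⟨one_mem_Rstar_dirac hM, by rw [hJd, hVpp]⟩, ?_⟩
    intro G hG r hr hJ
    rw [hVpp] at hJ
    obtain ⟨hrop, hSr, -⟩ := (chain_bound hQbar hM hk0 hk1 hG hr).2 (by rw [hVk]; exact hJ)
    have hr1 : r = 1 := by
      rw [hrop, hT0]
      simp [Real.exp_zero]
    have hSG1 : SG G 1 = 1 := hr1 ▸ hSr
    exact ⟨eq_dirac_of_atom_one hG (SG_one_eq_atom hG hSG1), hr1⟩
  · -- part (iii)
    rintro k ⟨hk12, hk1⟩
    have hk0 : 0 ≤ k := by linarith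
    have hkpos : 0 < k := by linarith
    have hT := Topt_eq_of_gt hk12
    have hrkIoo := rk_mem_Ioo (M := M) hM hk12
    refine ⟨hrkIoo, ?_⟩
    intro Gk hGk hCDFk
    obtain ⟨haM, ha1⟩ := hrkIoo
    have hCDF' : ∀ v, (Gk (Set.Iic v)).toReal
        = if v < rkFun M k then 0 else if v < 1 then 1 - (rkFun M k - M)/(v-M) else 1 := by
      intro v
      rw [hCDFk v]
      rfl
    have hS := SG_of_cdf hGk haM ha1 hCDF'
    have hRmem := rk_mem_Rstar hGk hM hk12 hS
    have hkT : k * Topt k = 2*k - 1 := by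
      rw [hT]
      field_simp
    have hsub : rkFun M k - M = (1-M) * Real.exp (-(Topt k)) := by
      rw [rk_eq' hk12]; ring
    have hCS := CS_at_rk hGk hQbar hM hk12 hS
    have hPi := Pi_at_rk (Qbar := Qbar) hGk hM hk12 hS
    have hJval : Jpp Qbar M k Gk (rkFun M k)
        = Qbar * (1-M) * (Real.exp (-(Topt k)) * (k * Topt k + (1-k))) := by
      unfold Jpp
      rw [hCS, hPi, hsub]
      ring
    have hub : ∀ x ∈ {x | ∃ G : Measure ℝ, ProbOn01 G ∧ ∃ r ∈ Rstar M G,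
        x = Jpp Qbar M k G r},
        x ≤ Qbar * (1-M) * (Real.exp (-(Topt k)) * (k * Topt k + (1-k))) := by
      rintro x ⟨G, hG, r, hr, rfl⟩
      exact (chain_bound hQbar hM hk0 hk1 hG hr).1
    have hmem : Qbar * (1-M) * (Real.exp (-(Topt k)) * (k * Topt k + (1-k)))
        ∈ {x | ∃ G : Measure ℝ, ProbOn01 G ∧ ∃ r ∈ Rstar M G, x = Jpp Qbar M k G r} :=
      ⟨Gk, hGk, rkFun M k, hRmem, hJval.symm⟩
    have hVpp : Vpp Qbar M k
        = Qbar * (1-M) * (Real.exp (-(Topt k)) * (k * Topt k + (1-k))) := by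
      unfold Vpp
      exact le_antisymm (csSup_le ⟨_, hmem⟩ hub) (le_csSup ⟨_, hub⟩ hmem)
    have hexpT : Real.exp (-(Topt k)) = Real.exp (-(2*k-1)/k) := by
      rw [hT, neg_div]
    refine ⟨hRmem, by rw [hJval, hVpp], ?_, ?_, ?_, ?_⟩
    · rw [hVpp, ← hexpT, hkT]
      ring
    · rw [hPi, hsub, hexpT]
      ring
    · rw [hCS, hsub, hexpT, hT]
      ring
    · -- uniqueness
      intro G hG r hr hJ
      rw [hVpp] at hJ
      obtain ⟨hrop, hSr, hCSeq⟩ := (chain_bound hQbar hM hk0 hk1 hG hr).2 hJ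
      have hra : r = rkFun M k := by rw [hrop, rk_eq' hk12]
      have hSra : SG G (rkFun M k) = 1 := hra ▸ hSr
      have hle : ∀ v ∈ Set.Icc (rkFun M k) 1, SG G v ≤ (rkFun M k - M) * (v-M)⁻¹ := by
        intro v hv
        have hvM : 0 < v - M := by linarith [hv.1]
        have h2 := hr.2 v ⟨haM.le.trans hv.1, hv.2⟩
        rw [hra] at h2
        rw [hSra, mul_one] at h2
        have h3 : SG G v ≤ (rkFun M k - M) / (v - M) :=
          (le_div_iff₀ hvM).mpr (by nlinarith)
        rw [div_eq_mul_inv] at h3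
        exact h3
      have hinteq : (∫ v in (rkFun M k)..1, SG G v)
          = ∫ v in (rkFun M k)..1, (rkFun M k - M)*(v-M)⁻¹ := by
        have h1 := hCSeq hkpos
        rw [hra] at h1
        have h2 : (∫ v in (rkFun M k)..1, (rkFun M k - M)*(v-M)⁻¹)
            = (rkFun M k - M) * Topt k := by
          rw [intervalIntegral.integral_const_mul, integral_inv_shift haM ha1.le,
            rk_log hM hk12]
        rw [h1, h2]
      have hae := ae_eq_of_integral_eq hG haM ha1.le hle hinteq
      have hptw := SG_eq_on_Ioc hG haM ha1.le hle hae
      have hSG : ∀ v, v ≤ 1 → SG G v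
          = if v ≤ rkFun M k then 1 else (rkFun M k - M)/(v-M) := by
        intro v hv1
        split_ifs with h
        · refine le_antisymm (SG_le_one hG v) ?_
          calc (1:ℝ) = SG G (rkFun M k) := hSra.symm
            _ ≤ SG G v := SG_anti hG h
        · exact hptw v ⟨not_le.mp h, hv1⟩
      have hCDF_G := cdf_of_SG hG haM ha1 hSG
      haveI := hG.1
      haveI := hGk.1
      have hGeq : G = Gk := by
        apply MeasureTheory.Measure.ext_of_Iic
        intro x
        have h3 := (hCDF_G x).trans (hCDF' x).symm
        exact (ENNReal.toReal_eq_toReal_iff' (measure_ne_top G _) (measure_ne_top Gk _)).mp h3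
      exact ⟨hGeq, hra⟩

end PostedPrice
end

section
/- In the constant-marginal-cost posted-price model, for k ∈ [0,1/2] set r_k := 1 and G_k* := δ₁ (point mass at 1), and for k ∈ (1/2,1] set r_k := M + (1−M)·e^{−(2k−1)/k} and let G_k* be the probability measure with CDF G_k*(v) = 0 for v < r_k, 1 − (r_k−M)/(v−M) for r_k ≤ v < 1, and 1 at v = 1. Then: (i) k ↦ r_k is weakly decreasing on [0,1] and strictly decreasing on (1/2,1]; (ii) the support of G_k* is [r_k,1], so supports are nested increasingly in k, strictly whenever the larger weight exceeds 1/2; (iii) the atom of G_k* at v = 1 has size a_k = 1 for k ∈ [0,1/2] and a_k = (r_k−M)/(1−M) = e^{−(2k−1)/k} for k ∈ (1/2,1], which is weakly decreasing in k and strictly decreasing on (1/2,1]; (iv) if 0 ≤ k₁ < k₂ ≤ 1, then G_{k₂}*(v) ≥ G_{k₁}*(v) for all v ∈ [0,1], with strict inequality for every v ∈ (r_{k₂},1) whenever k₂ > 1/2; i.e. the lower-weight optimal prior first-order stochastically dominates the higher-weight one. -/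
open MeasureTheory Set Filter

namespace PostedPrice

/-- Optimal cutoff for every welfare weight: `r_k = 1` for `k ≤ 1/2`, and
`r_k = M + (1−M)e^{−(2k−1)/k}` for `k > 1/2`. -/
noncomputable def rkAll (M k : ℝ) : ℝ := if k ≤ 1/2 then 1 else rkFun M k

/-- CDF of the optimal prior `G_k*`: the point mass at `1` for `k ≤ 1/2`, and the
shifted equal-revenue distribution with top atom for `k > 1/2`. -/
noncomputable def GstarCDF (M k v : ℝ) : ℝ :=
  if k ≤ 1/2 then (if v < 1 then 0 else 1) else GkCDF M k v


/-! ### Auxiliary lemmas -/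

section MeasAux
variable {μ' : Measure ℝ} [IsProbabilityMeasure μ'] {F : ℝ → ℝ}

lemma m_Iic (hF : ∀ v, (μ' (Iic v)).toReal = F v) (v : ℝ) :
    μ' (Iic v) = ENNReal.ofReal (F v) := by
  rw [← hF v, ENNReal.ofReal_toReal (measure_ne_top μ' _)]

lemma m_Ioc (hF : ∀ v, (μ' (Iic v)).toReal = F v) {a b : ℝ} (hab : a ≤ b) :
    μ' (Ioc a b) = ENNReal.ofReal (F b - F a) := by
  have h1 : Iic b \ Iic a = Ioc a b := Iic_sdiff_Iic
  have h2 : Iic a ⊆ Iic b := Iic_subset_Iic.mpr hab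
  rw [← h1, measure_diff h2 measurableSet_Iic.nullMeasurableSet (measure_ne_top μ' _),
    m_Iic hF, m_Iic hF, ← ENNReal.ofReal_sub _ (by rw [← hF a]; exact ENNReal.toReal_nonneg)]

lemma m_Iio_null (hF : ∀ v, (μ' (Iic v)).toReal = F v) {r : ℝ}
    (h0 : ∀ v, v < r → F v = 0) : μ' (Iio r) = 0 := by
  have hsub : Iio r ⊆ ⋃ n : ℕ, Iic (r - 1/(n+1)) := by
    intro x hx
    obtain ⟨n, hn⟩ := exists_nat_one_div_lt (K := ℝ) (sub_pos.mpr hx)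
    exact mem_iUnion.mpr ⟨n, by simp only [mem_Iic]; linarith⟩
  refine le_antisymm (le_trans (measure_mono hsub) ?_) zero_le
  rw [measure_iUnion_null fun n => ?_]
  have hlt : r - 1/((n:ℝ)+1) < r := by
    have : (0:ℝ) < 1/((n:ℝ)+1) := by positivity
    linarith
  rw [m_Iic hF, h0 _ hlt, ENNReal.ofReal_zero]

lemma m_Ioi_null (hF : ∀ v, (μ' (Iic v)).toReal = F v) (h1 : F 1 = 1) :
    μ' (Ioi 1) = 0 := by
  have : μ' (Ioi 1) = μ' (Iic 1)ᶜ := by rw [compl_Iic]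
  rw [this, measure_compl measurableSet_Iic (measure_ne_top μ' _), m_Iic hF, h1,
    ENNReal.ofReal_one, measure_univ, tsub_self]

lemma m_one (hF : ∀ v, (μ' (Iic v)).toReal = F v) {c : ℝ}
    (hc : Tendsto F (nhdsWithin 1 (Iio 1)) (nhds c)) :
    μ' {1} = ENNReal.ofReal (F 1 - c) := by
  set s : ℕ → Set ℝ := fun n => Ioc (1 - 1/(n+1)) 1 with hs
  have hanti : Antitone s := by
    intro m n hmn
    apply Ioc_subset_Ioc_left
    have : 1/((n:ℝ)+1) ≤ 1/((m:ℝ)+1) := by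
      gcongr <;> exact_mod_cast hmn
    linarith
  have hint : ⋂ n, s n = {1} := by
    ext x
    simp only [mem_iInter, hs, mem_Ioc, mem_singleton_iff]
    constructor
    · intro h
      by_contra hne
      have hx1 : x < 1 := lt_of_le_of_ne (h 0).2 hne
      obtain ⟨n, hn⟩ := exists_nat_one_div_lt (K := ℝ) (sub_pos.mpr hx1)
      have := (h n).1
      linarith
    · rintro rfl
      refine fun n => ⟨?_, le_refl _⟩
      have : (0:ℝ) < 1/((n:ℝ)+1) := by positivity
      linarith
  have htends : Tendsto (fun n => μ' (s n)) atTop (nhds (μ' {1})) := by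
    rw [← hint]
    exact tendsto_measure_iInter_atTop
      (fun n => measurableSet_Ioc.nullMeasurableSet) hanti ⟨0, measure_ne_top μ' _⟩
  have haseq : (fun n : ℕ => μ' (s n)) =
      fun n : ℕ => ENNReal.ofReal (F 1 - F (1 - 1/(n+1))) := by
    funext n
    refine m_Ioc hF ?_
    have : (0:ℝ) < 1/((n:ℝ)+1) := by positivity
    linarith
  have hseq : Tendsto (fun n : ℕ => (1 : ℝ) - 1/(n+1)) atTop (nhdsWithin 1 (Iio 1)) := by
    apply tendsto_nhdsWithin_of_tendsto_nhds_of_eventually_within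
    · have h0 : Tendsto (fun n : ℕ => 1/((n:ℝ)+1)) atTop (nhds 0) :=
        tendsto_one_div_add_atTop_nhds_zero_nat
      have := (tendsto_const_nhds (x := (1:ℝ)) (f := atTop (α := ℕ))).sub h0
      simpa using this
    · refine Eventually.of_forall fun n => ?_
      simp only [mem_Iio]
      have : (0:ℝ) < 1/((n:ℝ)+1) := by positivity
      linarith
  have htends2 : Tendsto (fun n : ℕ => μ' (s n)) atTop
      (nhds (ENNReal.ofReal (F 1 - c))) := by
    rw [haseq]
    exact (ENNReal.continuous_ofReal.tendsto _).comp
      ((tendsto_const_nhds).sub (hc.comp hseq))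
  exact tendsto_nhds_unique htends htends2

end MeasAux

lemma exp_pos' (k : ℝ) : 0 < Real.exp (-(2*k - 1)/k) := Real.exp_pos _

lemma exp_lt_one' (k : ℝ) (hk : 1/2 < k) : Real.exp (-(2*k - 1)/k) < 1 := by
  rw [Real.exp_lt_one_iff]
  have hk0 : 0 < k := lt_trans (by norm_num) hk
  have h1 : 0 < 2*k - 1 := by linarith
  have := div_pos h1 hk0
  rw [neg_div]; linarith

lemma rk_gt_M (M k : ℝ) (hM1 : M < 1) : M < rkFun M k := by
  have h1 := exp_pos' k
  have : 0 < (1 - M) * Real.exp (-(2*k - 1)/k) := mul_pos (by linarith) h1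
  unfold rkFun; linarith

lemma rk_lt_one (M k : ℝ) (hM1 : M < 1) (hk : 1/2 < k) : rkFun M k < 1 := by
  have h1 := exp_lt_one' k hk
  have h2 := exp_pos' k
  have : (1 - M) * Real.exp (-(2*k - 1)/k) < (1 - M) * 1 :=
    mul_lt_mul_of_pos_left h1 (by linarith)
  unfold rkFun; linarith

lemma exp_strictAnti' {a b : ℝ} (ha : 1/2 < a) (hab : a < b) :
    Real.exp (-(2*b - 1)/b) < Real.exp (-(2*a - 1)/a) := by
  apply Real.exp_lt_exp.mpr
  have ha0 : 0 < a := lt_trans (by norm_num) ha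
  have hb0 : 0 < b := lt_trans ha0 hab
  rw [div_lt_div_iff₀ hb0 ha0]
  nlinarith

lemma rk_strictAnti (M : ℝ) (hM1 : M < 1) {a b : ℝ} (ha : 1/2 < a) (hab : a < b) :
    rkFun M b < rkFun M a := by
  have h := exp_strictAnti' ha hab
  have : (1 - M) * Real.exp (-(2*b - 1)/b) < (1 - M) * Real.exp (-(2*a - 1)/a) :=
    mul_lt_mul_of_pos_left h (by linarith)
  unfold rkFun; linarith

lemma rk_le {M : ℝ} (hM1 : M < 1) {a b : ℝ} (ha : 1/2 < a) (hab : a ≤ b) :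
    rkFun M b ≤ rkFun M a := by
  rcases eq_or_lt_of_le hab with rfl | h
  · exact le_refl _
  · exact le_of_lt (rk_strictAnti M hM1 ha h)

lemma rkAll_le {M k₁ k₂ : ℝ} (hM1 : M < 1) (h : k₁ ≤ k₂) : rkAll M k₂ ≤ rkAll M k₁ := by
  unfold rkAll
  by_cases h2 : k₂ ≤ 1/2
  · rw [if_pos (le_trans h h2), if_pos h2]
  · rw [if_neg h2]
    by_cases h1 : k₁ ≤ 1/2
    · rw [if_pos h1]; exact le_of_lt (rk_lt_one M k₂ hM1 (lt_of_not_ge h2))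
    · rw [if_neg h1]; exact rk_le hM1 (lt_of_not_ge h1) h

lemma rkAll_lt {M k₁ k₂ : ℝ} (hM1 : M < 1) (h : k₁ < k₂) (h2 : 1/2 < k₂) :
    rkAll M k₂ < rkAll M k₁ := by
  unfold rkAll
  rw [if_neg (not_le.mpr h2)]
  by_cases h1 : k₁ ≤ 1/2
  · rw [if_pos h1]; exact rk_lt_one M k₂ hM1 h2
  · rw [if_neg h1]; exact rk_strictAnti M hM1 (lt_of_not_ge h1) h

lemma Gstar_one (M k : ℝ) (hM1 : M < 1) : GstarCDF M k 1 = 1 := by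
  unfold GstarCDF GkCDF
  by_cases hk : k ≤ 1/2
  · rw [if_pos hk, if_neg (lt_irrefl 1)]
  · rw [if_neg hk, if_neg (not_lt.mpr (le_of_lt (rk_lt_one M k hM1 (lt_of_not_ge hk)))),
      if_neg (lt_irrefl 1)]

lemma Gstar_ge_one (M k v : ℝ) (hM1 : M < 1) (hv : 1 ≤ v) : GstarCDF M k v = 1 := by
  unfold GstarCDF GkCDF
  by_cases hk : k ≤ 1/2
  · rw [if_pos hk, if_neg (not_lt.mpr hv)]
  · rw [if_neg hk,
      if_neg (not_lt.mpr (le_trans (le_of_lt (rk_lt_one M k hM1 (lt_of_not_ge hk))) hv)),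
      if_neg (not_lt.mpr hv)]

lemma Gstar_lt_rkAll (M k v : ℝ) (hv : v < rkAll M k) : GstarCDF M k v = 0 := by
  unfold GstarCDF GkCDF
  unfold rkAll at hv
  by_cases hk : k ≤ 1/2
  · rw [if_pos hk, if_pos (by rw [if_pos hk] at hv; exact hv)]
  · rw [if_neg hk, if_pos (by rw [if_neg hk] at hv; exact hv)]

lemma Gstar_mid (M k v : ℝ) (hk : ¬ k ≤ 1/2) (h1 : rkFun M k ≤ v) (h2 : v < 1) :
    GstarCDF M k v = 1 - (rkFun M k - M) / (v - M) := by
  unfold GstarCDF GkCDF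
  rw [if_neg hk, if_neg (not_lt.mpr h1), if_pos h2]

lemma Gstar_lt_one_of_le (M k v : ℝ) (hk : k ≤ 1/2) (hv : v < 1) : GstarCDF M k v = 0 := by
  unfold GstarCDF; rw [if_pos hk, if_pos hv]

lemma Gstar_nonneg (M k v : ℝ) (hM1 : M < 1) : 0 ≤ GstarCDF M k v := by
  unfold GstarCDF GkCDF
  by_cases hk : k ≤ 1/2
  · rw [if_pos hk]; split <;> norm_num
  · rw [if_neg hk]
    have hrM := rk_gt_M M k hM1
    split
    · exact le_refl _
    · split
      · rename_i h1 h2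
        push_neg at h1
        have hvM : 0 < v - M := by linarith
        have : (rkFun M k - M) / (v - M) ≤ 1 :=
          (div_le_one hvM).mpr (by linarith)
        linarith
      · norm_num

lemma Gstar_mono (M : ℝ) (hM1 : M < 1) {k₁ k₂ : ℝ} (h : k₁ ≤ k₂) (v : ℝ) :
    GstarCDF M k₁ v ≤ GstarCDF M k₂ v := by
  by_cases hv1 : v < 1
  · by_cases hk2 : k₂ ≤ 1/2
    · rw [Gstar_lt_one_of_le M k₁ v (le_trans h hk2) hv1,
        Gstar_lt_one_of_le M k₂ v hk2 hv1]
    · have hRnn := Gstar_nonneg M k₂ v hM1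
      by_cases hk1 : k₁ ≤ 1/2
      · rw [Gstar_lt_one_of_le M k₁ v hk1 hv1]; exact hRnn
      · by_cases hvr : v < rkFun M k₁
        · rw [Gstar_lt_rkAll M k₁ v (by unfold rkAll; rw [if_neg hk1]; exact hvr)]
          exact hRnn
        · push_neg at hvr
          have hr21 : rkFun M k₂ ≤ rkFun M k₁ := rk_le hM1 (lt_of_not_ge hk1) h
          have hrv2 : rkFun M k₂ ≤ v := le_trans hr21 hvr
          rw [Gstar_mid M k₁ v hk1 hvr hv1, Gstar_mid M k₂ v hk2 hrv2 hv1]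
          have hvM : 0 < v - M := by
            have := rk_gt_M M k₁ hM1; linarith
          have : (rkFun M k₂ - M) / (v - M) ≤ (rkFun M k₁ - M) / (v - M) := by
            gcongr
          linarith
  · push_neg at hv1
    rw [Gstar_ge_one M k₁ v hM1 hv1, Gstar_ge_one M k₂ v hM1 hv1]

lemma Gstar_strict (M : ℝ) (hM1 : M < 1) {k₁ k₂ v : ℝ} (h : k₁ < k₂) (hk2 : 1/2 < k₂)
    (hv : rkFun M k₂ < v) (hv1 : v < 1) : GstarCDF M k₁ v < GstarCDF M k₂ v := by
  have hrM := rk_gt_M M k₂ hM1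
  have hvM : 0 < v - M := by linarith
  have hR : GstarCDF M k₂ v = 1 - (rkFun M k₂ - M) / (v - M) :=
    Gstar_mid M k₂ v (not_le.mpr hk2) hv.le hv1
  have hRpos : 0 < GstarCDF M k₂ v := by
    rw [hR]
    have : (rkFun M k₂ - M) / (v - M) < 1 := (div_lt_one hvM).mpr (by linarith)
    linarith
  by_cases hk1 : k₁ ≤ 1/2
  · rw [Gstar_lt_one_of_le M k₁ v hk1 hv1]; exact hRpos
  · have hr21 : rkFun M k₂ < rkFun M k₁ := rk_strictAnti M hM1 (lt_of_not_ge hk1) h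
    by_cases hvr : v < rkFun M k₁
    · rw [Gstar_lt_rkAll M k₁ v (by unfold rkAll; rw [if_neg hk1]; exact hvr)]
      exact hRpos
    · push_neg at hvr
      rw [Gstar_mid M k₁ v hk1 hvr hv1, hR]
      have : (rkFun M k₂ - M) / (v - M) < (rkFun M k₁ - M) / (v - M) := by
        gcongr
      linarith

/-- The size of the atom of `G_k*` at `1`. -/
noncomputable def atomFun (M k : ℝ) : ℝ :=
  if k ≤ 1/2 then 1 else (rkFun M k - M)/(1 - M)

lemma atomFun_eq_exp {M : ℝ} (hM1 : M < 1) (k : ℝ) :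
    (rkFun M k - M)/(1 - M) = Real.exp (-(2*k - 1)/k) := by
  have h : (1:ℝ) - M ≠ 0 := by linarith
  unfold rkFun
  rw [add_sub_cancel_left, mul_comm, mul_div_assoc, div_self h, mul_one]

lemma atomFun_pos (M k : ℝ) (hM1 : M < 1) : 0 < atomFun M k := by
  unfold atomFun
  split
  · norm_num
  · have := rk_gt_M M k hM1
    apply div_pos <;> linarith

lemma atomFun_anti {M : ℝ} (hM1 : M < 1) {k₁ k₂ : ℝ} (h : k₁ ≤ k₂) :
    atomFun M k₂ ≤ atomFun M k₁ := by
  unfold atomFun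
  by_cases h2 : k₂ ≤ 1/2
  · rw [if_pos (le_trans h h2), if_pos h2]
  · rw [if_neg h2, atomFun_eq_exp hM1]
    by_cases h1 : k₁ ≤ 1/2
    · rw [if_pos h1]; exact (exp_lt_one' k₂ (lt_of_not_ge h2)).le
    · rw [if_neg h1, atomFun_eq_exp hM1]
      rcases eq_or_lt_of_le h with rfl | hlt
      · exact le_refl _
      · exact (exp_strictAnti' (lt_of_not_ge h1) hlt).le

lemma atomFun_strictAnti {M : ℝ} (hM1 : M < 1) {k₁ k₂ : ℝ} (h1 : 1/2 < k₁) (h : k₁ < k₂) :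
    atomFun M k₂ < atomFun M k₁ := by
  unfold atomFun
  rw [if_neg (not_le.mpr h1), if_neg (not_le.mpr (lt_trans h1 h)),
    atomFun_eq_exp hM1, atomFun_eq_exp hM1]
  exact exp_strictAnti' h1 h

lemma Gstar_tendsto (M k : ℝ) (hM1 : M < 1) :
    Tendsto (GstarCDF M k) (nhdsWithin 1 (Iio 1)) (nhds (1 - atomFun M k)) := by
  by_cases hk : k ≤ 1/2
  · have h0 : (1 : ℝ) - atomFun M k = 0 := by unfold atomFun; rw [if_pos hk]; ring
    rw [h0]
    apply Tendsto.congr' _ tendsto_const_nhds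
    filter_upwards [self_mem_nhdsWithin] with v hv
    exact (Gstar_lt_one_of_le M k v hk hv).symm
  · have hg : ContinuousAt (fun v : ℝ => 1 - (rkFun M k - M)/(v - M)) 1 := by
      apply ContinuousAt.sub continuousAt_const
      apply ContinuousAt.div continuousAt_const (by fun_prop)
      simp only [ne_eq]
      intro hc
      linarith
    have hval : (1 : ℝ) - (rkFun M k - M)/((1:ℝ) - M) = 1 - atomFun M k := by
      unfold atomFun; rw [if_neg hk]
    have hg2 : Tendsto (fun v : ℝ => 1 - (rkFun M k - M)/(v - M))
        (nhdsWithin 1 (Iio 1)) (nhds (1 - atomFun M k)) := by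
      have := hg.continuousWithinAt (s := Iio 1)
      unfold ContinuousWithinAt at this
      simpa [hval] using this
    apply Tendsto.congr' _ hg2
    filter_upwards [Ioo_mem_nhdsLT_of_mem
      (show (1:ℝ) ∈ Ioc (rkFun M k) 1 from ⟨rk_lt_one M k hM1 (lt_of_not_ge hk), le_refl 1⟩)]
      with v hv
    exact (Gstar_mid M k v hk hv.1.le hv.2).symm

lemma atom_val {μ' : Measure ℝ} [IsProbabilityMeasure μ'] (M k : ℝ) (hM1 : M < 1)
    (hF : ∀ v, (μ' (Iic v)).toReal = GstarCDF M k v) :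
    (μ' {1}).toReal = atomFun M k := by
  rw [m_one hF (Gstar_tendsto M k hM1), Gstar_one M k hM1,
    show (1 : ℝ) - (1 - atomFun M k) = atomFun M k by ring]
  exact ENNReal.toReal_ofReal (atomFun_pos M k hM1).le


/-- comparative statics of the optimal prior in the posted-price model:
(i) `k ↦ r_k` is weakly decreasing on `[0,1]`, strictly on `(1/2,1]`;
(ii) the support of `G_k*` is `[r_k,1]`, so supports are nested increasingly in `k`,
strictly whenever the larger weight exceeds `1/2`;
(iii) the atom of `G_k*` at `1` is `1` for `k ≤ 1/2` and `(r_k−M)/(1−M) = e^{−(2k−1)/k}`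
for `k > 1/2`, weakly decreasing in `k` and strictly decreasing on `(1/2,1]`;
(iv) lower-weight optimal priors first-order stochastically dominate higher-weight
ones, strictly on `(r_{k₂},1)` when `k₂ > 1/2`. -/
theorem posted_price_comparative_statics
    (Qbar M : ℝ) (hQbar : 0 < Qbar) (hM : M ∈ Set.Ico (0:ℝ) 1)
    (μ : ℝ → Measure ℝ)
    (hμ : ∀ k ∈ Set.Icc (0:ℝ) 1, ProbOn01 (μ k) ∧
      ∀ v : ℝ, ((μ k) (Set.Iic v)).toReal = GstarCDF M k v) :
    -- (i)
    (AntitoneOn (rkAll M) (Set.Icc 0 1) ∧ StrictAntiOn (rkAll M) (Set.Ioc (1/2) 1)) ∧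
    -- (ii)
    ((∀ k ∈ Set.Icc (0:ℝ) 1, ∀ s : Set ℝ, IsOpen s →
        ((μ k) s ≠ 0 ↔ (s ∩ Set.Icc (rkAll M k) 1).Nonempty)) ∧
     (∀ k₁ ∈ Set.Icc (0:ℝ) 1, ∀ k₂ ∈ Set.Icc (0:ℝ) 1, k₁ < k₂ →
        Set.Icc (rkAll M k₁) 1 ⊆ Set.Icc (rkAll M k₂) 1 ∧
        (1/2 < k₂ → Set.Icc (rkAll M k₁) 1 ⊂ Set.Icc (rkAll M k₂) 1))) ∧
    -- (iii)
    ((∀ k ∈ Set.Icc (0:ℝ) 1,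
        ((μ k) {1}).toReal = (if k ≤ 1/2 then 1 else (rkFun M k - M)/(1 - M)) ∧
        (1/2 < k → (rkFun M k - M)/(1 - M) = Real.exp (-(2*k - 1)/k))) ∧
     AntitoneOn (fun k => ((μ k) {1}).toReal) (Set.Icc 0 1) ∧
     StrictAntiOn (fun k => ((μ k) {1}).toReal) (Set.Ioc (1/2) 1)) ∧
    -- (iv)
    (∀ k₁ k₂ : ℝ, 0 ≤ k₁ → k₁ < k₂ → k₂ ≤ 1 →
      (∀ v ∈ Set.Icc (0:ℝ) 1, ((μ k₁) (Set.Iic v)).toReal ≤ ((μ k₂) (Set.Iic v)).toReal) ∧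
      (1/2 < k₂ → ∀ v ∈ Set.Ioo (rkAll M k₂) 1,
        ((μ k₁) (Set.Iic v)).toReal < ((μ k₂) (Set.Iic v)).toReal)) := by
  obtain ⟨hM0, hM1⟩ := hM
  refine ⟨⟨fun a _ b _ hab => rkAll_le hM1 hab,
      fun a ha b hb hab => rkAll_lt hM1 hab hb.1⟩, ⟨?_, ?_⟩, ⟨?_, ?_, ?_⟩, ?_⟩
  · -- (ii) support characterization
    intro k hk s hs
    obtain ⟨hprob, hcdf⟩ := hμ k hk
    haveI := hprob.1
    have hrM : M < rkAll M k := by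
      unfold rkAll
      split
      · linarith
      · exact rk_gt_M M k hM1
    have hr1 : rkAll M k ≤ 1 := by
      unfold rkAll
      split
      · exact le_refl _
      · exact (rk_lt_one M k hM1 (by linarith [lt_of_not_ge (by assumption)])).le
    have hIio : μ k (Iio (rkAll M k)) = 0 :=
      m_Iio_null hcdf fun v hv => Gstar_lt_rkAll M k v hv
    have hIoi : μ k (Ioi 1) = 0 := m_Ioi_null hcdf (Gstar_one M k hM1)
    have hatom : (μ k {1}).toReal = atomFun M k := atom_val M k hM1 hcdf
    constructor
    · intro hne
      by_contra hemp
      rw [Set.not_nonempty_iff_eq_empty] at hemp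
      have hsub : s ⊆ Iio (rkAll M k) ∪ Ioi 1 := by
        intro x hx
        have hnx : x ∉ Icc (rkAll M k) 1 := fun hmem =>
          (Set.eq_empty_iff_forall_notMem.mp hemp x) ⟨hx, hmem⟩
        rw [mem_Icc, not_and_or] at hnx
        rcases hnx with h | h
        · exact Or.inl (not_le.mp h)
        · exact Or.inr (not_le.mp h)
      exact hne (le_antisymm
        (le_trans (measure_mono hsub) (le_of_eq (measure_union_null hIio hIoi)))
        zero_le)
    · rintro ⟨x, hxs, hxr, hx1⟩
      rcases eq_or_lt_of_le hx1 with heq | hxlt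
      · -- x = 1 : use the atom
        subst heq
        intro h0
        have hzero : μ k {(1:ℝ)} = 0 := le_antisymm
          (le_trans (measure_mono (singleton_subset_iff.mpr hxs)) (le_of_eq h0))
          zero_le
        rw [hzero] at hatom
        have := atomFun_pos M k hM1
        simp only [ENNReal.toReal_zero] at hatom
        linarith
      · -- x < 1 : k must exceed 1/2 and we use an interval to the right of x
        have hk2 : ¬ k ≤ 1/2 := by
          intro h'
          unfold rkAll at hxr
          rw [if_pos h'] at hxr
          linarith
        have hxr' : rkFun M k ≤ x := by
          unfold rkAll at hxr
          rw [if_neg hk2] at hxr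
          exact hxr
        obtain ⟨ε, hε, hball⟩ := Metric.isOpen_iff.mp hs x hxs
        rw [Real.ball_eq_Ioo] at hball
        set b := min (x + ε/2) ((x+1)/2) with hb
        have hxb : x < b := lt_min (by linarith) (by linarith)
        have hb1 : b < 1 := lt_of_le_of_lt (min_le_right _ _) (by linarith)
        have hbs : Ioc x b ⊆ s := by
          intro y hy
          apply hball
          constructor
          · linarith [hy.1]
          · have : y ≤ x + ε/2 := le_trans hy.2 (min_le_left _ _)
            linarith
        have hIoc : μ k (Ioc x b) = ENNReal.ofReal (GstarCDF M k b - GstarCDF M k x) :=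
          m_Ioc hcdf hxb.le
        have hxM : 0 < x - M := by
          have := rk_gt_M M k hM1; linarith
        have hpos : 0 < GstarCDF M k b - GstarCDF M k x := by
          rw [Gstar_mid M k x hk2 hxr' hxlt,
            Gstar_mid M k b hk2 (le_trans hxr' hxb.le) hb1]
          have hd : (rkFun M k - M) / (b - M) < (rkFun M k - M) / (x - M) := by
            have := rk_gt_M M k hM1
            apply div_lt_div_of_pos_left (by linarith) hxM (by linarith)
          linarith
        have hne0 : 0 < μ k s := lt_of_lt_of_le
          (by rw [hIoc]; exact ENNReal.ofReal_pos.mpr hpos)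
          (measure_mono hbs)
        exact hne0.ne'
  · -- (ii) nested supports
    intro k₁ hk₁ k₂ hk₂ h12
    have hsub : Icc (rkAll M k₁) 1 ⊆ Icc (rkAll M k₂) 1 :=
      Icc_subset_Icc (rkAll_le hM1 h12.le) (le_refl 1)
    refine ⟨hsub, fun h2 => ?_⟩
    have hlt : rkAll M k₂ < rkAll M k₁ := rkAll_lt hM1 h12 h2
    have hr2lt1 : rkAll M k₂ < 1 := by
      unfold rkAll
      rw [if_neg (not_le.mpr h2)]
      exact rk_lt_one M k₂ hM1 h2
    rw [ssubset_iff_of_subset hsub]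
    exact ⟨rkAll M k₂, ⟨le_refl _, hr2lt1.le⟩, fun hmem => absurd hmem.1 (not_le.mpr hlt)⟩
  · -- (iii) atom values
    intro k hk
    obtain ⟨hprob, hcdf⟩ := hμ k hk
    haveI := hprob.1
    exact ⟨atom_val M k hM1 hcdf, fun hk2 => atomFun_eq_exp hM1 k⟩
  · -- (iii) atom antitone
    intro a ha b hb hab
    obtain ⟨hpa, hca⟩ := hμ a ha
    obtain ⟨hpb, hcb⟩ := hμ b hb
    haveI := hpa.1; haveI := hpb.1
    show ((μ b) {1}).toReal ≤ ((μ a) {1}).toReal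
    rw [atom_val M a hM1 hca, atom_val M b hM1 hcb]
    exact atomFun_anti hM1 hab
  · -- (iii) atom strictly antitone on (1/2,1]
    intro a ha b hb hab
    have ha' : a ∈ Icc (0:ℝ) 1 := ⟨by linarith [ha.1], ha.2⟩
    have hb' : b ∈ Icc (0:ℝ) 1 := ⟨by linarith [hb.1], hb.2⟩
    obtain ⟨hpa, hca⟩ := hμ a ha'
    obtain ⟨hpb, hcb⟩ := hμ b hb'
    haveI := hpa.1; haveI := hpb.1
    show ((μ b) {1}).toReal < ((μ a) {1}).toReal
    rw [atom_val M a hM1 hca, atom_val M b hM1 hcb]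
    exact atomFun_strictAnti hM1 ha.1 hab
  · -- (iv) stochastic dominance
    intro k₁ k₂ h0 h12 h2
    have hk₁ : k₁ ∈ Icc (0:ℝ) 1 := ⟨h0, by linarith⟩
    have hk₂ : k₂ ∈ Icc (0:ℝ) 1 := ⟨by linarith, h2⟩
    obtain ⟨hp1, hc1⟩ := hμ k₁ hk₁
    obtain ⟨hp2, hc2⟩ := hμ k₂ hk₂
    constructor
    · intro v hv
      rw [hc1 v, hc2 v]
      exact Gstar_mono M hM1 h12.le v
    · intro hhalf v hv
      rw [hc1 v, hc2 v]
      have hv1 : rkFun M k₂ < v := by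
        have := hv.1
        unfold rkAll at this
        rwa [if_neg (not_le.mpr hhalf)] at this
      exact Gstar_strict M hM1 h12 hhalf hv1 hv.2


end PostedPrice
end

section
/- Let G be a Borel probability measure on [0,1] with topological support equal to [v̲,1] for some v̲ ∈ (0,1), whose lower quantile Q_G(u) := inf{v ∈ [0,1] : G([0,v]) ≥ u} is strictly increasing on (0,b) and satisfies Q_G(u) = 1 for all u ∈ [b,1], for some b ∈ (0,1). Then for every integer N ≥ 2 and every a ∈ (0,v̲), there exists a Borel probability measure F on [0,1] such that: (1) F dominates G in the convex order, i.e. ∫ ψ dF ≥ ∫ ψ dG for every convex function ψ : [0,1] → ℝ (equivalently, G is a mean-preserving contraction of F); (2) the topological support of F has exactly N elements; (3) a belongs to the support of F. -/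
open MeasureTheory Set Filter

set_option maxHeartbeats 1000000

namespace MPS

/-- The lower quantile `Q_G(u) = inf{v ∈ [0,1] : G([0,v]) ≥ u}`. -/
noncomputable def QG (G : Measure ℝ) (u : ℝ) : ℝ :=
  sInf {v : ℝ | v ∈ Set.Icc (0:ℝ) 1 ∧ u ≤ (G (Set.Icc 0 v)).toReal}

lemma integrable_dirac'' {f : ℝ → ℝ} {a : ℝ} : Integrable f (Measure.dirac a) := by
  have h : f =ᵐ[Measure.dirac a] fun _ => f a := by
    rw [MeasureTheory.ae_dirac_eq]; exact Filter.eventually_pure.2 rfl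
  exact (integrable_const (f a)).congr h.symm

lemma two_point_bound {G : Measure ℝ} [IsProbabilityMeasure G] {vlow x : ℝ}
    (hx0 : 0 ≤ x) (hxv : x < vlow) (hv1 : vlow ≤ 1)
    (hae : ∀ᵐ v ∂G, v ∈ Set.Icc vlow 1)
    {ψ : ℝ → ℝ} (hψ : ConvexOn ℝ (Set.Icc 0 1) ψ)
    (hint : Integrable ψ G) (hid : Integrable (fun v : ℝ => v) G) :
    (∫ v, ψ v ∂G) ≤ ((1 - ∫ v, v ∂G)/(1-x)) * ψ x + (((∫ v, v ∂G) - x)/(1-x)) * ψ 1 := by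
  set m := ∫ v, v ∂G with hm
  have hx1 : x < 1 := lt_of_lt_of_le hxv hv1
  have hx1' : (0:ℝ) < 1 - x := by linarith
  have hL1 : Integrable (fun v => ψ x * (1 - v)) G :=
    ((integrable_const (1:ℝ)).sub hid).const_mul _
  have hL2 : Integrable (fun v => ψ 1 * (v - x)) G :=
    (hid.sub (integrable_const x)).const_mul _
  have hL : Integrable (fun v => (ψ x * (1 - v) + ψ 1 * (v - x)) / (1 - x)) G :=
    (hL1.add hL2).div_const _
  have hle : ∀ᵐ v ∂G, ψ v ≤ (ψ x * (1 - v) + ψ 1 * (v - x)) / (1 - x) := by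
    filter_upwards [hae] with v hv
    obtain ⟨hva, hvb⟩ := hv
    have h1 : (0:ℝ) ≤ (1 - v)/(1-x) := div_nonneg (by linarith) hx1'.le
    have h2 : (0:ℝ) ≤ (v - x)/(1-x) := div_nonneg (by linarith) hx1'.le
    have h3 : (1 - v)/(1-x) + (v - x)/(1-x) = 1 := by field_simp; ring
    have h4 := hψ.2 (Set.mem_Icc.mpr ⟨hx0, hx1.le⟩)
      (Set.mem_Icc.mpr ⟨zero_le_one, le_refl 1⟩) h1 h2 h3
    simp only [smul_eq_mul] at h4
    have h5 : (1 - v)/(1-x) * x + (v - x)/(1-x) * 1 = v := by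
      field_simp
      ring
    rw [h5] at h4
    calc ψ v ≤ (1 - v)/(1-x) * ψ x + (v - x)/(1-x) * ψ 1 := h4
      _ = (ψ x * (1 - v) + ψ 1 * (v - x)) / (1 - x) := by field_simp
  have hmain := integral_mono_ae hint hL hle
  have hcalc : ∫ v, (ψ x * (1 - v) + ψ 1 * (v - x)) / (1 - x) ∂G
      = (ψ x * (1 - m) + ψ 1 * (m - x)) / (1 - x) := by
    rw [integral_div, integral_add hL1 hL2, integral_const_mul, integral_const_mul,
      integral_sub (integrable_const 1) hid, integral_sub hid (integrable_const x),
      integral_const, integral_const]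
    simp [measure_univ, hm]
  rw [hcalc] at hmain
  calc (∫ v, ψ v ∂G) ≤ (ψ x * (1 - m) + ψ 1 * (m - x)) / (1 - x) := hmain
    _ = ((1 - m)/(1-x)) * ψ x + ((m - x)/(1-x)) * ψ 1 := by ring

/-- Let `G` be a Borel probability measure on `[0,1]` with topological
support `[v̲,1]` for some `v̲ ∈ (0,1)`, whose lower quantile is strictly increasing on
`(0,b)` and identically `1` on `[b,1]`, for some `b ∈ (0,1)`. Then for every integer
`N ≥ 2` and every `a ∈ (0,v̲)` there is a Borel probability measure `F` on `[0,1]`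
dominating `G` in the convex order whose support has exactly `N` points, one of which
is `a`. -/
theorem finite_support_mean_preserving_spread
    (G : Measure ℝ) (hG : IsProbabilityMeasure G) (hG01 : G (Set.Icc 0 1) = 1)
    (vlow b : ℝ) (hv : vlow ∈ Set.Ioo (0:ℝ) 1) (hb : b ∈ Set.Ioo (0:ℝ) 1)
    (hsupp : ∀ s : Set ℝ, IsOpen s → (G s ≠ 0 ↔ (s ∩ Set.Icc vlow 1).Nonempty))
    (hQmono : StrictMonoOn (QG G) (Set.Ioo 0 b))
    (hQtop : ∀ u ∈ Set.Icc b 1, QG G u = 1)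
    (N : ℕ) (hN : 2 ≤ N) (a : ℝ) (ha : a ∈ Set.Ioo 0 vlow) :
    ∃ F : Measure ℝ, IsProbabilityMeasure F ∧ F (Set.Icc 0 1) = 1 ∧
      (∀ ψ : ℝ → ℝ, ConvexOn ℝ (Set.Icc 0 1) ψ → (∫ x, ψ x ∂G) ≤ ∫ x, ψ x ∂F) ∧
      ∃ S : Finset ℝ, S.card = N ∧ a ∈ S ∧
        ∀ s : Set ℝ, IsOpen s → (F s ≠ 0 ↔ (s ∩ (S : Set ℝ)).Nonempty) := by
  obtain ⟨hv0, hv1⟩ := hv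
  obtain ⟨ha0, hav⟩ := ha
  -- G is concentrated on [vlow, 1]
  have hGlow : G (Set.Iio vlow) = 0 := by
    by_contra h
    obtain ⟨y, hy1, hy2⟩ := (hsupp _ isOpen_Iio).mp h
    exact absurd hy2.1 (not_le.mpr hy1)
  have hGout : G (Set.Icc (0:ℝ) 1)ᶜ = 0 := by
    rw [measure_compl measurableSet_Icc (by rw [hG01]; exact ENNReal.one_ne_top), measure_univ, hG01,
      tsub_self]
  have hae : ∀ᵐ v ∂G, v ∈ Set.Icc vlow 1 := by
    rw [ae_iff]
    have hsub : {v : ℝ | ¬ v ∈ Set.Icc vlow 1} ⊆ Set.Iio vlow ∪ (Set.Icc (0:ℝ) 1)ᶜ := by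
      intro v hv'
      simp only [Set.mem_Icc, not_and, not_le, Set.mem_setOf_eq] at hv'
      by_cases h : vlow ≤ v
      · right
        simp only [Set.mem_compl_iff, Set.mem_Icc, not_and, not_le]
        intro _
        exact hv' h
      · left; exact not_le.mp h
    refine le_antisymm ?_ zero_le
    calc G _ ≤ G (Set.Iio vlow ∪ (Set.Icc (0:ℝ) 1)ᶜ) := measure_mono hsub
      _ ≤ G (Set.Iio vlow) + G (Set.Icc (0:ℝ) 1)ᶜ := measure_union_le _ _
      _ = 0 := by rw [hGlow, hGout, add_zero]
  have hid : Integrable (fun v : ℝ => v) G := by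
    refine Integrable.mono' (integrable_const 1) aestronglyMeasurable_id ?_
    filter_upwards [hae] with v hv'
    rw [Real.norm_eq_abs, abs_le]
    exact ⟨by linarith [hv'.1], hv'.2⟩
  set m := ∫ v, v ∂G with hmdef
  have hm_ge : vlow ≤ m := by
    have := integral_mono_ae (integrable_const vlow) hid
      (by filter_upwards [hae] with v hv' using hv'.1)
    simpa [measure_univ] using this
  have hGc : G (Set.Iio ((vlow+1)/2)) ≠ 0 :=
    (hsupp _ isOpen_Iio).mpr ⟨vlow, Set.mem_Iio.mpr (by linarith), le_refl _, hv1.le⟩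
  have hGc' : 0 < (G (Set.Iio ((vlow+1)/2))).toReal :=
    ENNReal.toReal_pos hGc (measure_ne_top G _)
  have hm_lt : m < 1 := by
    set c := (vlow+1)/2 with hc
    have hintind : Integrable (fun v : ℝ =>
        (1:ℝ) - (1 - c) * Set.indicator (Set.Iio c) (fun _ => (1:ℝ)) v) G :=
      (integrable_const 1).sub
        (((integrable_const (1:ℝ)).indicator measurableSet_Iio).const_mul _)
    have hle2 : ∀ᵐ v ∂G, v ≤ 1 - (1 - c) * Set.indicator (Set.Iio c) (fun _ => (1:ℝ)) v := by
      filter_upwards [hae] with v hv'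
      by_cases h : v ∈ Set.Iio c
      · rw [Set.indicator_of_mem h]
        have : v < c := h
        simp only [mul_one]
        linarith
      · rw [Set.indicator_of_notMem h, mul_zero]
        linarith [hv'.2]
    have h3 := integral_mono_ae hid hintind hle2
    rw [integral_sub (integrable_const 1)
        (((integrable_const (1:ℝ)).indicator measurableSet_Iio).const_mul _),
      integral_const, integral_const_mul, integral_indicator_const _ measurableSet_Iio] at h3
    simp only [probReal_univ, measureReal_def, measure_univ, ENNReal.toReal_one, smul_eq_mul, one_smul, mul_one] at h3
    have hcpos : (0:ℝ) < 1 - c := by rw [hc]; linarith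
    nlinarith [mul_pos hcpos hGc']
  have hma : a < m := lt_of_lt_of_le hav hm_ge
  -- the support points
  set n := N - 1 with hn'
  have hn1 : 1 ≤ n := by omega
  have hnN : n + 1 = N := by omega
  have hnR : (1:ℝ) ≤ (n:ℝ) := by exact_mod_cast hn1
  have hnR0 : (0:ℝ) < (n:ℝ) := by linarith
  set pt : ℕ → ℝ := fun k => a * ((k:ℝ)+1) / (n:ℝ) with hpt
  have hpt_pos : ∀ k, 0 < pt k := fun k =>
    div_pos (mul_pos ha0 (by positivity)) hnR0
  have hpt_le : ∀ k, k < n → pt k ≤ a := by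
    intro k hk
    rw [hpt]
    rw [div_le_iff₀ hnR0]
    have hkn : (k:ℝ)+1 ≤ (n:ℝ) := by exact_mod_cast Nat.succ_le_of_lt hk
    nlinarith
  have hpt_lt1 : ∀ k, k < n → pt k < 1 := fun k hk =>
    lt_trans (lt_of_le_of_lt (hpt_le k hk) hav) hv1
  have hpt_ltm : ∀ k, k < n → pt k < m := fun k hk =>
    lt_of_le_of_lt (hpt_le k hk) hma
  set p : ℕ → ℝ := fun k => (1 - m) / ((n:ℝ) * (1 - pt k)) with hp
  set q : ℕ → ℝ := fun k => (m - pt k) / ((n:ℝ) * (1 - pt k)) with hq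
  have hp_pos : ∀ k, k < n → 0 < p k := fun k hk =>
    div_pos (by linarith) (mul_pos hnR0 (by linarith [hpt_lt1 k hk]))
  have hq_pos : ∀ k, k < n → 0 < q k := fun k hk =>
    div_pos (by linarith [hpt_ltm k hk]) (mul_pos hnR0 (by linarith [hpt_lt1 k hk]))
  have hpq : ∀ k, k < n → p k + q k = 1/(n:ℝ) := by
    intro k hk
    have h1 : (1:ℝ) - pt k ≠ 0 := ne_of_gt (by linarith [hpt_lt1 k hk])
    rw [hp, hq]
    field_simp
    ring
  set F : Measure ℝ := ∑ k ∈ Finset.range n,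
      (ENNReal.ofReal (p k) • Measure.dirac (pt k)
        + ENNReal.ofReal (q k) • Measure.dirac 1) with hF
  have hFapp : ∀ s : Set ℝ, F s = ∑ k ∈ Finset.range n,
      (ENNReal.ofReal (p k) * Measure.dirac (pt k) s
        + ENNReal.ofReal (q k) * Measure.dirac 1 s) := by
    intro s
    rw [hF, Measure.finset_sum_apply]
    refine Finset.sum_congr rfl fun k _ => ?_
    rw [Measure.add_apply, Measure.smul_apply, Measure.smul_apply, smul_eq_mul, smul_eq_mul]
  have hmass : ∀ s : Set ℝ, (∀ k, k < n → pt k ∈ s) → (1:ℝ) ∈ s → F s = 1 := by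
    intro s hs1 hs2
    rw [hFapp]
    have hterm : ∀ k ∈ Finset.range n,
        ENNReal.ofReal (p k) * Measure.dirac (pt k) s
          + ENNReal.ofReal (q k) * Measure.dirac 1 s = ENNReal.ofReal (1/(n:ℝ)) := by
      intro k hk
      rw [Finset.mem_range] at hk
      rw [Measure.dirac_apply, Measure.dirac_apply, Set.indicator_of_mem (hs1 k hk),
        Set.indicator_of_mem hs2]
      simp only [Pi.one_apply, mul_one]
      rw [← ENNReal.ofReal_add (hp_pos k hk).le (hq_pos k hk).le, hpq k hk]
    rw [Finset.sum_congr rfl hterm, Finset.sum_const, Finset.card_range, nsmul_eq_mul,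
      ← ENNReal.ofReal_natCast, ← ENNReal.ofReal_mul (by positivity), mul_one_div,
      div_self (ne_of_gt hnR0), ENNReal.ofReal_one]
  have hFprob : IsProbabilityMeasure F := ⟨hmass Set.univ (fun _ _ => trivial) trivial⟩
  have hF01 : F (Set.Icc 0 1) = 1 :=
    hmass _ (fun k hk => ⟨(hpt_pos k).le, (hpt_lt1 k hk).le⟩) ⟨zero_le_one, le_refl 1⟩
  have hFint : ∀ f : ℝ → ℝ,
      ∫ v, f v ∂F = ∑ k ∈ Finset.range n, (p k * f (pt k) + q k * f 1) := by
    intro f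
    rw [hF, integral_finset_sum_measure (fun k _ =>
      (integrable_dirac''.smul_measure ENNReal.ofReal_ne_top).add_measure
        (integrable_dirac''.smul_measure ENNReal.ofReal_ne_top))]
    refine Finset.sum_congr rfl fun k hk => ?_
    rw [Finset.mem_range] at hk
    rw [integral_add_measure (integrable_dirac''.smul_measure ENNReal.ofReal_ne_top)
        (integrable_dirac''.smul_measure ENNReal.ofReal_ne_top),
      integral_smul_measure, integral_smul_measure, integral_dirac, integral_dirac,
      ENNReal.toReal_ofReal (hp_pos k hk).le, ENNReal.toReal_ofReal (hq_pos k hk).le]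
    simp [smul_eq_mul]
  refine ⟨F, hFprob, hF01, ?_, ?_⟩
  · -- convex order
    intro ψ hψ
    have hψc : ContinuousOn ψ (Set.Ioo 0 1) := by
      have h := hψ.continuousOn_interior
      rwa [interior_Icc] at h
    have hm1 : AEStronglyMeasurable ψ (G.restrict (Set.Ioo 0 1)) :=
      hψc.aestronglyMeasurable measurableSet_Ioo
    have hm2 : AEStronglyMeasurable ψ (G.restrict {1}) := by
      refine (aestronglyMeasurable_const (b := ψ 1)).congr ?_
      rw [EventuallyEq, ae_restrict_iff' (measurableSet_singleton (1:ℝ))]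
      refine Filter.Eventually.of_forall fun v hv' => ?_
      rw [Set.mem_singleton_iff] at hv'
      rw [hv']
    have hGrest : G.restrict (Set.Ioo 0 1 ∪ {1}) = G := by
      refine Measure.restrict_eq_self_of_ae_mem ?_
      filter_upwards [hae] with v hv'
      rcases eq_or_lt_of_le hv'.2 with h | h
      · exact Or.inr (by simp [h])
      · exact Or.inl ⟨lt_of_lt_of_le hv0 hv'.1, h⟩
    have hψmeas : AEStronglyMeasurable ψ G := by
      rw [← hGrest, Measure.restrict_union (by simp) (measurableSet_singleton 1)]
      exact hm1.add_measure hm2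
    have hbd : ∀ v ∈ Set.Icc (0:ℝ) 1, |ψ v| ≤ |ψ 0| + |ψ 1| + 2*|ψ (1/2)| := by
      intro v hv'
      obtain ⟨h0, h1⟩ := hv'
      have hup : ψ v ≤ (1-v) * ψ 0 + v * ψ 1 := by
        have h : ψ ((1-v) • (0:ℝ) + v • (1:ℝ)) ≤ (1-v) • ψ 0 + v • ψ 1 :=
          hψ.2 (Set.left_mem_Icc.mpr zero_le_one) (Set.right_mem_Icc.mpr zero_le_one)
            (by linarith) h0 (by ring)
        simpa using h
      have hup2 : ψ (1-v) ≤ v * ψ 0 + (1-v) * ψ 1 := by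
        have h : ψ (v • (0:ℝ) + (1-v) • (1:ℝ)) ≤ v • ψ 0 + (1-v) • ψ 1 :=
          hψ.2 (Set.left_mem_Icc.mpr zero_le_one) (Set.right_mem_Icc.mpr zero_le_one)
            h0 (by linarith) (by ring)
        simpa using h
      have hmid : ψ (1/2 : ℝ) ≤ (1/2) * ψ v + (1/2) * ψ (1-v) := by
        have h : ψ ((1/2:ℝ) • v + (1/2:ℝ) • (1-v)) ≤ (1/2:ℝ) • ψ v + (1/2:ℝ) • ψ (1-v) :=
          hψ.2 (Set.mem_Icc.mpr ⟨h0, h1⟩)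
            (Set.mem_Icc.mpr ⟨by linarith, by linarith⟩)
            (by norm_num : (0:ℝ) ≤ 1/2) (by norm_num : (0:ℝ) ≤ 1/2) (by norm_num)
        simp only [smul_eq_mul] at h
        have he : (1/2:ℝ) * v + (1/2:ℝ) * (1-v) = 1/2 := by ring
        rwa [he] at h
      have e0 := le_abs_self (ψ 0)
      have e1 := le_abs_self (ψ 1)
      have e2 := neg_abs_le (ψ (1/2 : ℝ))
      have f0 : (1-v) * ψ 0 ≤ (1-v) * |ψ 0| :=
        mul_le_mul_of_nonneg_left e0 (by linarith)
      have f1 : v * ψ 1 ≤ v * |ψ 1| := mul_le_mul_of_nonneg_left e1 h0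
      have f2 : v * ψ 0 ≤ v * |ψ 0| := mul_le_mul_of_nonneg_left e0 h0
      have f3 : (1-v) * ψ 1 ≤ (1-v) * |ψ 1| :=
        mul_le_mul_of_nonneg_left e1 (by linarith)
      rw [abs_le]
      constructor
      · nlinarith [abs_nonneg (ψ 0), abs_nonneg (ψ 1)]
      · nlinarith [abs_nonneg (ψ 0), abs_nonneg (ψ 1), abs_nonneg (ψ (1/2 : ℝ))]
    have hψint : Integrable ψ G := by
      refine Integrable.mono' (integrable_const (|ψ 0| + |ψ 1| + 2*|ψ (1/2 : ℝ)|)) hψmeas ?_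
      filter_upwards [hae] with v hv'
      rw [Real.norm_eq_abs]
      exact hbd v ⟨le_trans hv0.le hv'.1, hv'.2⟩
    rw [hFint ψ]
    have hbound : ∀ k ∈ Finset.range n,
        (1/(n:ℝ)) * ∫ v, ψ v ∂G ≤ p k * ψ (pt k) + q k * ψ 1 := by
      intro k hk
      rw [Finset.mem_range] at hk
      have h2p := two_point_bound (hpt_pos k).le (lt_of_le_of_lt (hpt_le k hk) hav) hv1.le
        hae hψ hψint hid
      rw [← hmdef] at h2p
      have h1k : (1:ℝ) - pt k ≠ 0 := ne_of_gt (by linarith [hpt_lt1 k hk])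
      calc (1/(n:ℝ)) * ∫ v, ψ v ∂G
          ≤ (1/(n:ℝ)) * (((1 - m)/(1 - pt k)) * ψ (pt k) + ((m - pt k)/(1 - pt k)) * ψ 1) :=
            mul_le_mul_of_nonneg_left h2p (by positivity)
        _ = p k * ψ (pt k) + q k * ψ 1 := by
            rw [hp, hq]
            field_simp
    have hsum := Finset.sum_le_sum hbound
    rw [Finset.sum_const, Finset.card_range, nsmul_eq_mul] at hsum
    have : (n:ℝ) * ((1/(n:ℝ)) * ∫ v, ψ v ∂G) = ∫ v, ψ v ∂G := by
      field_simp
    rw [this] at hsum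
    exact hsum
  · -- support
    have hinj : Function.Injective pt := by
      intro k j h
      rw [hpt] at h
      simp only at h
      field_simp at h
      exact_mod_cast (by linarith : (k:ℝ) = j)
    have hdisj : Disjoint ((Finset.range n).image pt) ({1} : Finset ℝ) := by
      rw [Finset.disjoint_singleton_right, Finset.mem_image]
      rintro ⟨k, hk, hk1⟩
      rw [Finset.mem_range] at hk
      exact absurd hk1 (ne_of_lt (hpt_lt1 k hk))
    refine ⟨(Finset.range n).image pt ∪ {1}, ?_, ?_, ?_⟩
    · rw [Finset.card_union_of_disjoint hdisj, Finset.card_image_of_injective _ hinj,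
        Finset.card_range, Finset.card_singleton, hnN]
    · refine Finset.mem_union_left _ (Finset.mem_image.mpr ⟨n-1, Finset.mem_range.mpr (by omega), ?_⟩)
      rw [hpt]
      simp only
      rw [Nat.cast_sub hn1]
      push_cast
      rw [sub_add_cancel, mul_div_assoc, div_self (ne_of_gt hnR0), mul_one]
    · intro s _
      constructor
      · intro hFs
        by_contra hne
        apply hFs
        rw [hFapp s]
        refine Finset.sum_eq_zero fun k hk => ?_
        rw [Finset.mem_range] at hk
        have hpt_notin : pt k ∉ s := by
          intro hmem
          exact hne ⟨pt k, hmem, Finset.mem_coe.mpr (Finset.mem_union_left _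
            (Finset.mem_image.mpr ⟨k, Finset.mem_range.mpr hk, rfl⟩))⟩
        have h1_notin : (1:ℝ) ∉ s := by
          intro hmem
          exact hne ⟨1, hmem, Finset.mem_coe.mpr (Finset.mem_union_right _
            (Finset.mem_singleton_self 1))⟩
        rw [Measure.dirac_apply, Measure.dirac_apply, Set.indicator_of_notMem hpt_notin,
          Set.indicator_of_notMem h1_notin, mul_zero, mul_zero, add_zero]
      · rintro ⟨y, hys, hyS⟩
        rw [hFapp s]
        intro h0
        rw [Finset.sum_eq_zero_iff] at h0
        rcases Finset.mem_union.mp (Finset.mem_coe.mp hyS) with hy | hy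
        · obtain ⟨k, hk, rfl⟩ := Finset.mem_image.mp hy
          have hz := h0 k hk
          rw [Finset.mem_range] at hk
          rw [Measure.dirac_apply, Set.indicator_of_mem hys] at hz
          simp only [Pi.one_apply, mul_one] at hz
          have := (add_eq_zero.mp hz).1
          rw [ENNReal.ofReal_eq_zero] at this
          linarith [hp_pos k hk]
        · rw [Finset.mem_singleton] at hy
          subst hy
          have hz := h0 0 (Finset.mem_range.mpr (by omega))
          rw [Measure.dirac_apply 1 s, Set.indicator_of_mem hys] at hz
          simp only [Pi.one_apply, mul_one] at hz
          have := (add_eq_zero.mp hz).2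
          rw [ENNReal.ofReal_eq_zero] at this
          linarith [hq_pos 0 (by omega)]

end MPS
end
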